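/- arXiv:2011.01737 — 7 statements merged into one kernel-verified Lean document; each statement's English description precedes it below -/
import Mathlib

section
/- Let A⁺, A⁻, B⁺, B⁻ be symmetric matrices with A⁻, B⁻ positive definite. Then ‖(A⁻)^{-1/2} A⁺ (A⁻)^{-1/2} - (B⁻)^{-1/2} B⁺ (B⁻)^{-1/2}‖ ≤ ‖(A⁻)^{-1}‖·‖A⁺‖·(‖I - (B⁻)^{-1/2}(A⁻)^{1/2}‖² + 2‖I - (B⁻)^{-1/2}(A⁻)^{1/2}‖) + ‖(B⁻)^{-1}‖·‖A⁺ - B⁺‖. -/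
open Matrix

/-- The square root of a positive semidefinite matrix, as `Matrix.PosSemidef.sqrt` was defined
in Mathlib of December 2024 (since removed). -/
noncomputable def Matrix.PosSemidef.sqrt {n : Type*} [Fintype n] [DecidableEq n]
    {A : Matrix n n ℝ} (hA : A.PosSemidef) : Matrix n n ℝ :=
  hA.1.eigenvectorUnitary.1 * diagonal ((↑) ∘ (√·) ∘ hA.1.eigenvalues) *
    (star hA.1.eigenvectorUnitary : Matrix n n ℝ)

/-- The spectral (ℓ²-operator) norm of a square real matrix. -/
noncomputable def specNorm {n : ℕ} (A : Matrix (Fin n) (Fin n) ℝ) : ℝ :=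
  ‖Matrix.toEuclideanCLM (𝕜 := ℝ) A‖

set_option maxHeartbeats 2000000 in
set_option synthInstance.maxHeartbeats 1000000 in
/-- First inequality of Proposition `normcmcpcm_cmecpecme`: for symmetric `A⁺, B⁺`
and positive definite `A⁻, B⁻`,
`‖(A⁻)^{-1/2} A⁺ (A⁻)^{-1/2} - (B⁻)^{-1/2} B⁺ (B⁻)^{-1/2}‖ ≤
  ‖(A⁻)^{-1}‖ ‖A⁺‖ (‖I - (B⁻)^{-1/2}(A⁻)^{1/2}‖² + 2‖I - (B⁻)^{-1/2}(A⁻)^{1/2}‖)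
  + ‖(B⁻)^{-1}‖ ‖A⁺ - B⁺‖`. -/
theorem congruence_perturbation_bound_one {n : ℕ}
    (Ap Am Bp Bm : Matrix (Fin n) (Fin n) ℝ)
    (hAp : Ap.IsSymm) (hBp : Bp.IsSymm) (hAm : Am.PosDef) (hBm : Bm.PosDef) :
    specNorm ((Matrix.PosSemidef.sqrt hAm.posSemidef)⁻¹ * Ap * (Matrix.PosSemidef.sqrt hAm.posSemidef)⁻¹
        - (Matrix.PosSemidef.sqrt hBm.posSemidef)⁻¹ * Bp * (Matrix.PosSemidef.sqrt hBm.posSemidef)⁻¹)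
      ≤ specNorm Am⁻¹ * specNorm Ap *
          (specNorm (1 - (Matrix.PosSemidef.sqrt hBm.posSemidef)⁻¹ * Matrix.PosSemidef.sqrt hAm.posSemidef) ^ 2
            + 2 * specNorm (1 - (Matrix.PosSemidef.sqrt hBm.posSemidef)⁻¹ * Matrix.PosSemidef.sqrt hAm.posSemidef))
        + specNorm Bm⁻¹ * specNorm (Ap - Bp) := by
  have sqH : ∀ {M : Matrix (Fin n) (Fin n) ℝ} (hM : M.PosSemidef),
      star (Matrix.PosSemidef.sqrt hM) = Matrix.PosSemidef.sqrt hM := by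
    intro M hM
    have hD : ∀ f : Fin n → ℝ, star (diagonal f) = diagonal f := by
      intro f; rw [star_eq_conjTranspose, diagonal_conjTranspose]; simp
    simp only [Matrix.PosSemidef.sqrt, StarMul.star_mul, star_star, hD, Matrix.mul_assoc]
  have sqM : ∀ {M : Matrix (Fin n) (Fin n) ℝ} (hM : M.PosSemidef),
      Matrix.PosSemidef.sqrt hM * Matrix.PosSemidef.sqrt hM = M := by
    intro M hM
    have hU := Matrix.mem_unitaryGroup_iff'.mp hM.1.eigenvectorUnitary.2
    have hS := hM.1.spectral_theorem
    rw [Unitary.conjStarAlgAut_apply] at hS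
    conv_rhs => rw [hS]
    simp only [Matrix.PosSemidef.sqrt, Matrix.mul_assoc]
    rw [← Matrix.mul_assoc (star _) _ _, hU, Matrix.one_mul, ← Matrix.mul_assoc (diagonal _),
      diagonal_mul_diagonal]
    congr 2
    ext i j
    simp only [diagonal_apply]
    split_ifs <;> simp [Real.mul_self_sqrt (hM.eigenvalues_nonneg i)]
  set X := Matrix.PosSemidef.sqrt hAm.posSemidef with hXdef
  set Y := Matrix.PosSemidef.sqrt hBm.posSemidef with hYdef
  -- basic facts about X and Y
  have hXH : star X = X := sqH hAm.posSemidef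
  have hYH : star Y = Y := sqH hBm.posSemidef
  have hXX : X * X = Am := sqM hAm.posSemidef
  have hYY : Y * Y = Bm := sqM hBm.posSemidef
  have hXdet : IsUnit X.det := by
    have : X.det * X.det = Am.det := by rw [← Matrix.det_mul, hXX]
    have hpos : (0:ℝ) < Am.det := hAm.det_pos
    refine isUnit_iff_ne_zero.2 fun h => ?_
    rw [h, mul_zero] at this; exact hpos.ne' this.symm
  have hYdet : IsUnit Y.det := by
    have : Y.det * Y.det = Bm.det := by rw [← Matrix.det_mul, hYY]
    have hpos : (0:ℝ) < Bm.det := hBm.det_pos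
    refine isUnit_iff_ne_zero.2 fun h => ?_
    rw [h, mul_zero] at this; exact hpos.ne' this.symm
  have hXXi : X * X⁻¹ = 1 := Matrix.mul_nonsing_inv X hXdet
  have hXiX : X⁻¹ * X = 1 := Matrix.nonsing_inv_mul X hXdet
  have hXiH : star X⁻¹ = X⁻¹ := by
    rw [Matrix.star_eq_conjTranspose, Matrix.conjTranspose_nonsing_inv,
      ← Matrix.star_eq_conjTranspose, hXH]
  have hYiH : star Y⁻¹ = Y⁻¹ := by
    rw [Matrix.star_eq_conjTranspose, Matrix.conjTranspose_nonsing_inv,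
      ← Matrix.star_eq_conjTranspose, hYH]
  have hXiXi : X⁻¹ * X⁻¹ = Am⁻¹ := by rw [← Matrix.mul_inv_rev, hXX]
  have hYiYi : Y⁻¹ * Y⁻¹ = Bm⁻¹ := by rw [← Matrix.mul_inv_rev, hYY]
  set E : Matrix (Fin n) (Fin n) ℝ := 1 - Y⁻¹ * X with hEdef
  set C : Matrix (Fin n) (Fin n) ℝ := X⁻¹ * Ap * X⁻¹ with hCdef
  have hstarE : star E = 1 - X * Y⁻¹ := by
    rw [hEdef, star_sub, star_one, StarMul.star_mul, hXH, hYiH]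
  -- the key algebraic identity
  have hc1 : ∀ z : Matrix (Fin n) (Fin n) ℝ, X * (X⁻¹ * z) = z := fun z => by
    rw [← Matrix.mul_assoc, hXXi, Matrix.one_mul]
  have hc2 : ∀ z : Matrix (Fin n) (Fin n) ℝ, X⁻¹ * (X * z) = z := fun z => by
    rw [← Matrix.mul_assoc, hXiX, Matrix.one_mul]
  have key : X⁻¹ * Ap * X⁻¹ - Y⁻¹ * Bp * Y⁻¹
      = E * C + C * star E - E * C * star E + Y⁻¹ * (Ap - Bp) * Y⁻¹ := by
    rw [hstarE, hEdef, hCdef]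
    simp only [sub_mul, mul_sub, one_mul, mul_one, Matrix.mul_assoc, hc1, hc2]
    abel
  -- push everything through the star algebra equivalence
  set φ := Matrix.toEuclideanCLM (𝕜 := ℝ) (n := Fin n)
  have hsn : ∀ M : Matrix (Fin n) (Fin n) ℝ, specNorm M = ‖φ M‖ := fun M => rfl
  have hnorm_decomp :
      specNorm (X⁻¹ * Ap * X⁻¹ - Y⁻¹ * Bp * Y⁻¹)
        ≤ ‖φ E‖ * ‖φ C‖ + ‖φ C‖ * ‖φ E‖ + ‖φ E‖ * ‖φ C‖ * ‖φ E‖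
          + ‖φ Y⁻¹‖ * ‖φ (Ap - Bp)‖ * ‖φ Y⁻¹‖ := by
    rw [key, hsn]
    have h1 : φ (E * C + C * star E - E * C * star E + Y⁻¹ * (Ap - Bp) * Y⁻¹)
        = φ E * φ C + φ C * star (φ E) - φ E * φ C * star (φ E)
          + φ Y⁻¹ * φ (Ap - Bp) * φ Y⁻¹ := by
      simp only [map_add, map_sub, _root_.map_mul, map_star]
    rw [h1]
    calc ‖φ E * φ C + φ C * star (φ E) - φ E * φ C * star (φ E)
            + φ Y⁻¹ * φ (Ap - Bp) * φ Y⁻¹‖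
        ≤ ‖φ E * φ C + φ C * star (φ E) - φ E * φ C * star (φ E)‖
            + ‖φ Y⁻¹ * φ (Ap - Bp) * φ Y⁻¹‖ := norm_add_le _ _
      _ ≤ (‖φ E * φ C + φ C * star (φ E)‖ + ‖φ E * φ C * star (φ E)‖)
            + ‖φ Y⁻¹ * φ (Ap - Bp) * φ Y⁻¹‖ := by
            gcongr; exact norm_sub_le _ _
      _ ≤ ((‖φ E * φ C‖ + ‖φ C * star (φ E)‖) + ‖φ E * φ C * star (φ E)‖)
            + ‖φ Y⁻¹ * φ (Ap - Bp) * φ Y⁻¹‖ := by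
            gcongr; exact norm_add_le _ _
      _ ≤ ‖φ E‖ * ‖φ C‖ + ‖φ C‖ * ‖φ E‖ + ‖φ E‖ * ‖φ C‖ * ‖φ E‖
            + ‖φ Y⁻¹‖ * ‖φ (Ap - Bp)‖ * ‖φ Y⁻¹‖ := by
            have b1 : ‖φ E * φ C‖ ≤ ‖φ E‖ * ‖φ C‖ := norm_mul_le _ _
            have hsE : ‖star (φ E)‖ = ‖φ E‖ := by
              rw [ContinuousLinearMap.star_eq_adjoint]
              exact LinearIsometryEquiv.norm_map _ _
            have b2 : ‖φ C * star (φ E)‖ ≤ ‖φ C‖ * ‖φ E‖ := by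
              refine (norm_mul_le _ _).trans ?_
              rw [hsE]
            have b3 : ‖φ E * φ C * star (φ E)‖ ≤ ‖φ E‖ * ‖φ C‖ * ‖φ E‖ := by
              refine (norm_mul_le _ _).trans ?_
              rw [hsE]
              exact mul_le_mul_of_nonneg_right (norm_mul_le _ _) (norm_nonneg _)
            have b4 : ‖φ Y⁻¹ * φ (Ap - Bp) * φ Y⁻¹‖
                ≤ ‖φ Y⁻¹‖ * ‖φ (Ap - Bp)‖ * ‖φ Y⁻¹‖ := by
              refine (norm_mul_le _ _).trans ?_
              exact mul_le_mul_of_nonneg_right (norm_mul_le _ _) (norm_nonneg _)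
            exact add_le_add (add_le_add (add_le_add b1 b2) b3) b4
  -- C* identities for the squared norms
  have hx2 : ‖φ X⁻¹‖ * ‖φ X⁻¹‖ = specNorm Am⁻¹ := by
    rw [hsn, ← hXiXi, _root_.map_mul]
    conv_lhs => rw [← CStarRing.norm_star_mul_self (x := φ X⁻¹)]
    rw [← map_star, hXiH]
  have hy2 : ‖φ Y⁻¹‖ * ‖φ Y⁻¹‖ = specNorm Bm⁻¹ := by
    rw [hsn, ← hYiYi, _root_.map_mul]
    conv_lhs => rw [← CStarRing.norm_star_mul_self (x := φ Y⁻¹)]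
    rw [← map_star, hYiH]
  have hC_le : ‖φ C‖ ≤ specNorm Am⁻¹ * ‖φ Ap‖ := by
    calc ‖φ C‖ = ‖φ X⁻¹ * φ Ap * φ X⁻¹‖ := by rw [hCdef]; simp only [_root_.map_mul]
      _ ≤ ‖φ X⁻¹‖ * ‖φ Ap‖ * ‖φ X⁻¹‖ := by
          refine (norm_mul_le _ _).trans ?_
          gcongr; exact norm_mul_le _ _
      _ = ‖φ X⁻¹‖ * ‖φ X⁻¹‖ * ‖φ Ap‖ := by ring
      _ = specNorm Am⁻¹ * ‖φ Ap‖ := by rw [hx2]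
  have he : specNorm (1 - Y⁻¹ * X) = ‖φ E‖ := by rw [hEdef] at *; exact hsn _
  have hy_rearrange : ‖φ Y⁻¹‖ * ‖φ (Ap - Bp)‖ * ‖φ Y⁻¹‖
      = specNorm Bm⁻¹ * specNorm (Ap - Bp) := by
    rw [hsn (Ap - Bp), ← hy2]; ring
  refine hnorm_decomp.trans ?_
  rw [he, hsn Ap, hsn (Ap - Bp), ← hy2, ← hx2]
  have hE0 : (0:ℝ) ≤ ‖φ E‖ := norm_nonneg _
  have hAp0 : (0:ℝ) ≤ ‖φ Ap‖ := norm_nonneg _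
  have hC0 : (0:ℝ) ≤ ‖φ C‖ := norm_nonneg _
  rw [← hx2] at hC_le
  nlinarith [mul_le_mul_of_nonneg_left hC_le hE0,
    mul_le_mul_of_nonneg_left (mul_le_mul_of_nonneg_left hC_le hE0) hE0,
    sq_nonneg ‖φ E‖, norm_nonneg (φ X⁻¹), norm_nonneg (φ Y⁻¹)]
end

section
/- Let A be a real symmetric n×n matrix with signed degrees d_j = Σ_{j'}|A_{jj'}|, and let γ⁺, γ⁻ ≥ 0 with γ = γ⁺ + γ⁻ > 0. Define A_γ = A + ((γ⁺−γ⁻)/n)·J (J the all-ones matrix), D̄_γ = diag(d_j + γ), and L_γ = I − D̄_γ^{-1/2} A_γ D̄_γ^{-1/2}. Then every eigenvalue of L_γ lies in [0, 2]. -/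
open Matrix

lemma quad_abs_bound {n : ℕ} (B : Matrix (Fin n) (Fin n) ℝ)
    (hB : ∀ i k, B i k = B k i) (c y : Fin n → ℝ)
    (hc : ∀ i, ∑ k, |B i k| ≤ c i) :
    |∑ i, ∑ k, B i k * y i * y k| ≤ ∑ i, c i * y i ^ 2 := by
  calc |∑ i, ∑ k, B i k * y i * y k| ≤ ∑ i, ∑ k, |B i k * y i * y k| := by
        refine (Finset.abs_sum_le_sum_abs _ _).trans ?_
        gcongr with i _
        exact Finset.abs_sum_le_sum_abs _ _
    _ ≤ ∑ i, ∑ k, |B i k| * ((y i ^ 2 + y k ^ 2) / 2) := by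
        gcongr with i _ k _
        rw [abs_mul, abs_mul]
        nlinarith [sq_nonneg (|y i| - |y k|), sq_abs (y i), sq_abs (y k),
          abs_nonneg (B i k), abs_nonneg (y i), abs_nonneg (y k)]
    _ = ∑ i, (∑ k, |B i k|) * y i ^ 2 := by
        have h1 : ∀ i k : Fin n, |B i k| * ((y i ^ 2 + y k ^ 2) / 2)
            = |B i k| * y i ^ 2 / 2 + |B i k| * y k ^ 2 / 2 := by intro i k; ring
        simp only [h1, Finset.sum_add_distrib]
        have h2 : ∑ i : Fin n, ∑ k : Fin n, |B i k| * y k ^ 2 / 2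
            = ∑ i : Fin n, ∑ k : Fin n, |B i k| * y i ^ 2 / 2 := by
          rw [Finset.sum_comm]
          refine Finset.sum_congr rfl fun i _ => Finset.sum_congr rfl fun k _ => ?_
          rw [hB i k]
        rw [h2, ← Finset.sum_add_distrib]
        refine Finset.sum_congr rfl fun i _ => ?_
        rw [← Finset.sum_add_distrib, Finset.sum_mul]
        refine Finset.sum_congr rfl fun k _ => by ring
    _ ≤ ∑ i, c i * y i ^ 2 :=
        Finset.sum_le_sum fun i _ => mul_le_mul_of_nonneg_right (hc i) (sq_nonneg _)

/-- The eigenvalues of the regularized symmetric Signed Laplacian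
`L_γ = I - D̄_γ^{-1/2} A_γ D̄_γ^{-1/2}`, where `A_γ = A + ((γp-γm)/n) J` and
`D̄_γ = diag(d_j + γ)` with `γ = γp + γm > 0`, lie in `[0, 2]`. -/
theorem regularized_signed_laplacian_spectrum_in_Icc {n : ℕ}
    (A : Matrix (Fin n) (Fin n) ℝ) (hA : A.IsSymm)
    (d : Fin n → ℝ) (hd : ∀ j, d j = ∑ j', |A j j'|)
    (γp γm : ℝ) (hγp : 0 ≤ γp) (hγm : 0 ≤ γm) (hγ : 0 < γp + γm)
    (Aγ Lγ : Matrix (Fin n) (Fin n) ℝ)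
    (hAγ : Aγ = A + ((γp - γm) / n) • (Matrix.of fun _ _ => (1 : ℝ)))
    (hLγ : Lγ = 1 - Matrix.diagonal (fun j => (Real.sqrt (d j + (γp + γm)))⁻¹) * Aγ *
        Matrix.diagonal (fun j => (Real.sqrt (d j + (γp + γm)))⁻¹)) :
    spectrum ℝ Lγ ⊆ Set.Icc (0 : ℝ) 2 := by
  set γ := γp + γm with hγdef
  set t : Fin n → ℝ := fun j => d j + γ with hts
  have ht : ∀ j, 0 < t j := by
    intro j
    have h0 : 0 ≤ d j := by
      rw [hd j]; exact Finset.sum_nonneg fun k _ => abs_nonneg _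
    have : (0:ℝ) < γ := hγ
    simp only [hts]; linarith
  set s : Fin n → ℝ := fun j => (Real.sqrt (t j))⁻¹ with hss
  -- symmetry of Aγ entrywise
  have hAsymm : ∀ i k, A i k = A k i := fun i k => by
    conv_lhs => rw [← hA]
    rfl
  have hAγsymm : ∀ i k, Aγ i k = Aγ k i := by
    intro i k
    simp [hAγ, hAsymm i k]
  -- row sum bound
  have hrow : ∀ i, ∑ k, |Aγ i k| ≤ t i := by
    intro i
    have hn : 0 < n := i.pos
    have step : ∀ k, |Aγ i k| ≤ |A i k| + |γp - γm| / n := by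
      intro k
      simp only [hAγ, Matrix.add_apply, Matrix.smul_apply, Matrix.of_apply, smul_eq_mul, mul_one]
      refine (abs_add_le _ _).trans ?_
      gcongr
      rw [abs_div, abs_of_nonneg (by positivity : (0:ℝ) ≤ (n:ℝ))]
    calc ∑ k, |Aγ i k| ≤ ∑ k, (|A i k| + |γp - γm| / n) :=
          Finset.sum_le_sum fun k _ => step k
      _ = d i + |γp - γm| := by
          rw [Finset.sum_add_distrib, ← hd i, Finset.sum_const, Finset.card_univ,
            Fintype.card_fin, nsmul_eq_mul]
          congr 1
          field_simp
      _ ≤ t i := by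
          have : |γp - γm| ≤ γ := (abs_sub _ _).trans
            (by rw [abs_of_nonneg hγp, abs_of_nonneg hγm])
          simp only [hts]; linarith
  -- the quadratic form of Lγ
  have hquad : ∀ x : Fin n → ℝ,
      x ⬝ᵥ (Lγ *ᵥ x) = x ⬝ᵥ x - ∑ i, ∑ k, Aγ i k * (s i * x i) * (s k * x k) := by
    intro x
    rw [hLγ, sub_mulVec, dotProduct_sub, one_mulVec]
    congr 1
    simp only [dotProduct, mulVec, Matrix.diagonal_mul, Matrix.mul_diagonal, Matrix.of_apply,
      dotProduct, Finset.mul_sum]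
    refine Finset.sum_congr rfl fun i _ => Finset.sum_congr rfl fun k _ => by ring
  -- bound on the middle term
  have hmid : ∀ x : Fin n → ℝ,
      |∑ i, ∑ k, Aγ i k * (s i * x i) * (s k * x k)| ≤ x ⬝ᵥ x := by
    intro x
    have := quad_abs_bound Aγ hAγsymm t (fun i => s i * x i) hrow
    refine this.trans (le_of_eq ?_)
    simp only [dotProduct]
    refine Finset.sum_congr rfl fun i _ => ?_
    have hti := ht i
    have hsq : Real.sqrt (t i) ^ 2 = t i := Real.sq_sqrt hti.le
    have hsne : Real.sqrt (t i) ≠ 0 := by positivity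
    have h2 : ((Real.sqrt (t i))⁻¹) ^ 2 = (t i)⁻¹ := by
      rw [← Real.sqrt_inv, Real.sq_sqrt (inv_nonneg.mpr hti.le)]
    simp only [hss, mul_pow, h2]
    rw [← mul_assoc, mul_inv_cancel₀ hti.ne', one_mul, sq]
  have hquad_lb : ∀ x : Fin n → ℝ, 0 ≤ x ⬝ᵥ (Lγ *ᵥ x) := by
    intro x
    rw [hquad x]
    have := (abs_le.mp (hmid x)).2
    linarith
  have hquad_ub : ∀ x : Fin n → ℝ, x ⬝ᵥ (Lγ *ᵥ x) ≤ 2 * (x ⬝ᵥ x) := by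
    intro x
    rw [hquad x]
    have := (abs_le.mp (hmid x)).1
    linarith
  -- Hermitian
  have hLherm : Lγ.IsHermitian := by
    rw [hLγ]
    refine Matrix.IsHermitian.sub Matrix.isHermitian_one ?_
    have hSherm : (Matrix.diagonal (fun j => (Real.sqrt (d j + (γp + γm)))⁻¹)).IsHermitian :=
      Matrix.isHermitian_diagonal _
    have hAγherm : Aγ.IsHermitian := by
      unfold Matrix.IsHermitian
      ext i k
      simp [Matrix.conjTranspose_apply, hAγsymm i k]
    unfold Matrix.IsHermitian
    rw [Matrix.conjTranspose_mul, Matrix.conjTranspose_mul, hSherm, hAγherm, Matrix.mul_assoc]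
  intro μ hμ
  rw [spectrum.mem_iff] at hμ
  by_contra hout
  apply hμ
  rw [Set.mem_Icc, not_and_or, not_le, not_le] at hout
  have halg : (algebraMap ℝ (Matrix (Fin n) (Fin n) ℝ)) μ = μ • 1 :=
    Algebra.algebraMap_eq_smul_one μ
  have hsmulherm : (μ • (1 : Matrix (Fin n) (Fin n) ℝ)).IsHermitian := by
    unfold Matrix.IsHermitian
    ext i k
    simp [Matrix.conjTranspose_apply, Matrix.one_apply]
    split_ifs with h h' h' <;> simp_all [Matrix.one_apply]
  rcases hout with hneg | hbig
  · -- μ < 0 : Lγ - μ•1 is positive definite, hence a unit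
    have hpd : (Lγ - μ • 1).PosDef := by
      refine Matrix.PosDef.of_dotProduct_mulVec_pos (hLherm.sub hsmulherm) fun x hx => ?_
      have hxx : 0 < x ⬝ᵥ x := by
        have := Matrix.dotProduct_star_self_pos_iff (v := x) |>.mpr hx
        simpa using this
      have : x ⬝ᵥ ((Lγ - μ • 1) *ᵥ x) = x ⬝ᵥ (Lγ *ᵥ x) - μ * (x ⬝ᵥ x) := by
        rw [sub_mulVec, dotProduct_sub, smul_mulVec, one_mulVec, dotProduct_smul]
        rfl
      have hq := hquad_lb x
      simp only [star_trivial]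
      rw [this]
      nlinarith
    have : IsUnit (Lγ - μ • 1) := hpd.isUnit
    rw [halg]
    have hrw : μ • (1 : Matrix (Fin n) (Fin n) ℝ) - Lγ = -(Lγ - μ • 1) := (neg_sub _ _).symm
    rw [hrw]
    exact this.neg
  · -- μ > 2 : μ•1 - Lγ is positive definite
    have hpd : (μ • (1 : Matrix (Fin n) (Fin n) ℝ) - Lγ).PosDef := by
      refine Matrix.PosDef.of_dotProduct_mulVec_pos (hsmulherm.sub hLherm) fun x hx => ?_
      have hxx : 0 < x ⬝ᵥ x := by
        have := Matrix.dotProduct_star_self_pos_iff (v := x) |>.mpr hx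
        simpa using this
      have : x ⬝ᵥ ((μ • (1 : Matrix (Fin n) (Fin n) ℝ) - Lγ) *ᵥ x)
          = μ * (x ⬝ᵥ x) - x ⬝ᵥ (Lγ *ᵥ x) := by
        rw [sub_mulVec, dotProduct_sub, smul_mulVec, one_mulVec, dotProduct_smul]
        rfl
      have hq := hquad_ub x
      simp only [star_trivial]
      rw [this]
      nlinarith
    rw [halg]
    exact hpd.isUnit
end

section
/- Under the SSBM, the population symmetric Signed Laplacian L_sym := I − (E[D̄])^{-1/2} E[A] (E[D̄])^{-1/2} admits the decomposition L_sym = [Θ V⊥] · diag(C̄, ᾱ I_{n−k}) · [Θ V⊥]ᵀ, where ᾱ = 1 + (p/d̄)(1−2η), C̄ = ᾱ I_k − B̄ with B̄_{ii} = (n_i p/d̄)(1−2η), B̄_{ii'} = −(√(n_i n_{i'}) p/d̄)(1−2η) for i≠i', Θ is the normalized membership matrix, and V⊥ is any orthonormal basis of the orthogonal complement of the column span of Θ. -/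
open Matrix

/-- Orthonormal columns spanning everything: completeness relation. -/
lemma aux_complete {n k : ℕ} (hk : k ≤ n)
    (Θ : Matrix (Fin n) (Fin k) ℝ) (V : Matrix (Fin n) (Fin (n - k)) ℝ)
    (h1 : Θᵀ * Θ = 1) (h2 : Vᵀ * V = 1) (h3 : Θᵀ * V = 0) :
    Θ * Θᵀ + V * Vᵀ = 1 := by
  set M : Matrix (Fin n) (Fin k ⊕ Fin (n - k)) ℝ := fromCols Θ V with hM
  have e : (Fin k ⊕ Fin (n - k)) ≃ Fin n :=
    finSumFinEquiv.trans (finCongr (Nat.add_sub_cancel' hk))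
  have hMM : Mᵀ * M = 1 := by
    rw [hM, transpose_fromCols, fromRows_mul_fromCols, h1, h2, h3]
    have h3' : Vᵀ * Θ = 0 := by
      have := congrArg Matrix.transpose h3
      simpa [Matrix.transpose_mul] using this
    rw [h3', fromBlocks_one]
  -- reindexed square matrix
  set N : Matrix (Fin n) (Fin n) ℝ := M.submatrix id ⇑e.symm with hN
  have hNN : Nᵀ * N = 1 := by
    have : Mᵀ.submatrix (⇑e.symm) ⇑(Equiv.refl (Fin n)) *
        M.submatrix (⇑(Equiv.refl (Fin n))) ⇑e.symm = (Mᵀ * M).submatrix (⇑e.symm) (⇑e.symm) :=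
      Matrix.submatrix_mul_equiv _ _ _ _ _
    simpa [hN, hMM, Matrix.transpose_submatrix, Matrix.submatrix_one_equiv] using this
  have hNN' : N * Nᵀ = 1 := mul_eq_one_comm.mp hNN
  have hMMt : M * Mᵀ = Θ * Θᵀ + V * Vᵀ := by
    rw [hM, transpose_fromCols, fromCols_mul_fromRows]
  have : N * Nᵀ = M * Mᵀ := by
    have : M.submatrix id ⇑e.symm * Mᵀ.submatrix (⇑e.symm) id = (M * Mᵀ).submatrix id id :=
      Matrix.submatrix_mul_equiv _ _ _ _ _
    simpa [hN, Matrix.transpose_submatrix] using this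
  rw [← hMMt, ← this, hNN']

lemma aux_k_le_n {n k : ℕ} (Θ : Matrix (Fin n) (Fin k) ℝ) (h1 : Θᵀ * Θ = 1) : k ≤ n := by
  have hinj : Function.Injective ⇑(Matrix.toLin' Θ) := by
    have : Matrix.toLin' Θᵀ ∘ₗ Matrix.toLin' Θ = LinearMap.id := by
      rw [← Matrix.toLin'_mul, h1, Matrix.toLin'_one]
    intro x y hxy
    have h2 := congrArg (Matrix.toLin' Θᵀ) hxy
    rw [← LinearMap.comp_apply, ← LinearMap.comp_apply, this] at h2
    simpa using h2
  have := LinearMap.finrank_le_finrank_of_injective hinj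
  simpa [Module.finrank_fintype_fun_eq_card] using this


/-- Decomposition of the population symmetric Signed Laplacian in the SSBM:
`L_sym = I - (E D̄)^{-1/2} E[A] (E D̄)^{-1/2}` (with `E[D̄] = d̄ I`, `d̄ = p(n-1)`)
satisfies `L_sym = Θ C̄ Θᵀ + ᾱ V⊥ V⊥ᵀ`, i.e. the block-diagonal form
`[Θ V⊥] diag(C̄, ᾱ I_{n-k}) [Θ V⊥]ᵀ`, where `ᾱ = 1 + (p/d̄)(1-2η)`,
`C̄ = ᾱ I_k - B̄`, and `V⊥` is any orthonormal basis of the orthogonal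
complement of the column span of `Θ`. -/
theorem ssbm_population_laplacian_decomposition {n k : ℕ} (hn : 2 ≤ n)
    (c : Fin n → Fin k) (p η : ℝ)
    (hp : 0 < p) (hp1 : p ≤ 1) (hη : 0 ≤ η) (hη2 : η < 1/2)
    (nsize : Fin k → ℕ)
    (hnsize : ∀ i, nsize i = (Finset.univ.filter (fun j => c j = i)).card)
    (EA Lsym : Matrix (Fin n) (Fin n) ℝ)
    (Θ : Matrix (Fin n) (Fin k) ℝ) (Bbar Cbar : Matrix (Fin k) (Fin k) ℝ)
    (Vperp : Matrix (Fin n) (Fin (n - k)) ℝ) (abar : ℝ)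
    (hEA : ∀ j j', EA j j' = if j = j' then 0
        else if c j = c j' then p * (1 - 2*η) else -(p * (1 - 2*η)))
    (hΘ : ∀ j i, Θ j i = if c j = i then 1 / Real.sqrt (nsize i) else 0)
    (hΘorth : Θᵀ * Θ = 1)
    (hVorth : Vperpᵀ * Vperp = 1) (hΘV : Θᵀ * Vperp = 0)
    (hB : ∀ i i', Bbar i i' =
        if i = i' then (nsize i : ℝ) * p * (1 - 2*η) / (p * ((n : ℝ) - 1))
        else -(Real.sqrt ((nsize i : ℝ) * (nsize i' : ℝ)) * p * (1 - 2*η)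
          / (p * ((n : ℝ) - 1))))
    (habar : abar = 1 + (p / (p * ((n : ℝ) - 1))) * (1 - 2*η))
    (hCbar : Cbar = abar • (1 : Matrix (Fin k) (Fin k) ℝ) - Bbar)
    (hLsym : Lsym = 1 -
        Matrix.diagonal (fun _ : Fin n => (Real.sqrt (p * ((n : ℝ) - 1)))⁻¹) * EA *
        Matrix.diagonal (fun _ : Fin n => (Real.sqrt (p * ((n : ℝ) - 1)))⁻¹)) :
    Lsym = Θ * Cbar * Θᵀ + abar • (Vperp * Vperpᵀ) := by
  set d : ℝ := p * ((n : ℝ) - 1) with hdd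
  have hn1 : (1 : ℝ) ≤ (n : ℝ) - 1 := by
    have : (2 : ℝ) ≤ (n : ℝ) := by exact_mod_cast hn
    linarith
  have hd : 0 < d := by
    have : (0:ℝ) < (n : ℝ) - 1 := by linarith
    exact mul_pos hp this
  clear_value d
  have hd0 : d ≠ 0 := ne_of_gt hd
  have hns : ∀ j : Fin n, 0 < (nsize (c j) : ℝ) := by
    intro j
    have : 0 < nsize (c j) := by
      rw [hnsize]
      exact Finset.card_pos.mpr ⟨j, by simp⟩
    exact_mod_cast this
  have hsq : ∀ j : Fin n, 0 < Real.sqrt (nsize (c j)) :=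
    fun j => Real.sqrt_pos.mpr (hns j)
  have hsq0 : ∀ j : Fin n, Real.sqrt (nsize (c j)) ≠ 0 := fun j => ne_of_gt (hsq j)
  have hmul : ∀ j : Fin n, Real.sqrt (nsize (c j)) * Real.sqrt (nsize (c j)) = (nsize (c j) : ℝ) :=
    fun j => Real.mul_self_sqrt (le_of_lt (hns j))
  have hk : k ≤ n := aux_k_le_n Θ hΘorth
  have hcomp : Θ * Θᵀ + Vperp * Vperpᵀ = 1 := aux_complete hk Θ Vperp hΘorth hVorth hΘV
  have hkey : Θ * Bbar * Θᵀ = (abar - 1) • (1 : Matrix (Fin n) (Fin n) ℝ) + d⁻¹ • EA := by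
    ext j j'
    have hrow : ∀ x : Fin k, (Θ * Bbar) j x = (Real.sqrt (nsize (c j)))⁻¹ * Bbar (c j) x := by
      intro x
      rw [Matrix.mul_apply]
      rw [Finset.sum_eq_single (c j)]
      · rw [hΘ]; simp [one_div]
      · intro b _ hb; rw [hΘ]; simp [Ne.symm hb]
      · simp
    rw [Matrix.mul_apply, Finset.sum_eq_single (c j')]
    · rw [hrow, Matrix.transpose_apply, hΘ, if_pos rfl, hB]
      simp only [one_div, Matrix.add_apply, Matrix.smul_apply, smul_eq_mul]
      rw [hEA]
      by_cases hcc : c j = c j'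
      · rw [if_pos hcc, hcc]
        by_cases hjj : j = j'
        · subst hjj
          simp only [if_pos rfl, Matrix.one_apply_eq, mul_one, mul_zero, add_zero, habar]
          have hs := hsq0 j
          field_simp
          rw [Real.sq_sqrt (le_of_lt (hns j)), if_pos trivial]
          ring
        · rw [if_neg hjj, if_pos rfl, Matrix.one_apply_ne hjj, mul_zero, zero_add]
          have hs := hsq0 j'
          field_simp
          rw [Real.sq_sqrt (le_of_lt (hns j'))]
      · have hjj : j ≠ j' := by rintro rfl; exact hcc rfl
        rw [if_neg hcc, if_neg hjj, if_neg hcc, Matrix.one_apply_ne hjj, mul_zero, zero_add]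
        rw [Real.sqrt_mul (le_of_lt (hns j))]
        have hs := hsq0 j
        have hs' := hsq0 j'
        field_simp
    · intro b _ hb
      rw [Matrix.transpose_apply, hΘ, if_neg (Ne.symm hb), mul_zero]
    · simp
  have hdiag : Matrix.diagonal (fun _ : Fin n => (Real.sqrt d)⁻¹) * EA *
      Matrix.diagonal (fun _ : Fin n => (Real.sqrt d)⁻¹) = d⁻¹ • EA := by
    have h1 : Matrix.diagonal (fun _ : Fin n => (Real.sqrt d)⁻¹) =
        (Real.sqrt d)⁻¹ • (1 : Matrix (Fin n) (Fin n) ℝ) := by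
      rw [Matrix.smul_one_eq_diagonal]
    rw [h1, Matrix.smul_mul, Matrix.one_mul, Matrix.mul_smul, Matrix.mul_one, smul_smul]
    congr 1
    rw [← mul_inv, Real.mul_self_sqrt (le_of_lt hd)]
  rw [hLsym, hdiag, hCbar]
  rw [Matrix.mul_sub, Matrix.sub_mul, Matrix.mul_smul, Matrix.mul_one, Matrix.smul_mul, hkey]
  rw [sub_add_eq_add_sub, ← smul_add, hcomp]
  rw [sub_add_eq_sub_sub, ← sub_smul]
  have h2 : abar - (abar - 1) = 1 := by ring
  rw [h2, one_smul]
end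

section
/- Let C̄ = c·uuᵀ + diag(d_i) ∈ ℝ^{k×k} with c > 0, u entrywise positive, d_i > 0, and let R = [R_{k−1}, γ₁] be an orthogonal matrix of eigenvectors of C̄ where γ₁ is the top eigenvector and R_{k−1} ∈ ℝ^{k×(k−1)} collects the remaining eigenvectors. Then for all i ≠ i', ‖(R_{k−1})_{i*} − (R_{k−1})_{i'*}‖ ≥ 1, where (R_{k−1})_{i*} denotes the i-th row of R_{k−1}. -/
open Matrix

/-- Row separation of the non-top eigenvectors: if `C̄ = c·uuᵀ + diag(d)` with
`c > 0`, `u, d` entrywise positive, `R = [R_{k-1}, γ₁]` is an orthogonal matrix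
of eigenvectors of `C̄` with `γ₁` the top eigenvector (a unit-norm maximizer of
the Rayleigh quotient) and `R_{k-1}` the remaining eigenvectors, then any two
distinct rows of `R_{k-1}` are at distance at least `1`. -/
theorem row_separation_of_eigenvector_matrix {k : ℕ} (u d : Fin k → ℝ) (c : ℝ)
    (hu : ∀ i, 0 < u i) (hd : ∀ i, 0 < d i) (hc : 0 < c)
    (C : Matrix (Fin k) (Fin k) ℝ)
    (hC : C = c • Matrix.vecMulVec u u + Matrix.diagonal d)
    (Rk : Matrix (Fin k) (Fin (k - 1)) ℝ) (γ₁ : Fin k → ℝ)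
    -- the square matrix `[R_{k-1}, γ₁]` is orthogonal (orthonormal rows):
    (hRorth : ∀ i i', (∑ j, Rk i j * Rk i' j) + γ₁ i * γ₁ i'
        = if i = i' then (1 : ℝ) else 0)
    -- the columns of `R_{k-1}` are eigenvectors of `C̄`:
    (hRkeig : ∀ j, ∃ μ : ℝ, C.mulVec (fun i => Rk i j) = μ • fun i => Rk i j)
    -- `γ₁` is a top eigenvector, i.e. a unit-norm Rayleigh-quotient maximizer:
    (hγnorm : ∑ i, γ₁ i ^ 2 = 1)
    (hγmax : ∀ v : Fin k → ℝ, ∑ i, v i ^ 2 = 1 →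
      v ⬝ᵥ C.mulVec v ≤ γ₁ ⬝ᵥ C.mulVec γ₁) :
    ∀ i i', i ≠ i' → 1 ≤ Real.sqrt (∑ j, (Rk i j - Rk i' j) ^ 2) := by
  -- All entries of C are positive
  have hCpos : ∀ i j, 0 < C i j := by
    intro i j
    subst hC
    simp only [Matrix.add_apply, Matrix.smul_apply, Matrix.vecMulVec_apply,
      Matrix.diagonal_apply, smul_eq_mul]
    split_ifs with h
    · exact add_pos (mul_pos hc (mul_pos (hu i) (hu j))) (hd i)
    · simpa using mul_pos hc (mul_pos (hu i) (hu j))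
  -- the top eigenvector has entries of a common sign
  have hsign : ∀ i i', 0 ≤ γ₁ i * γ₁ i' := by
    intro i i'
    by_contra hneg
    push_neg at hneg
    set v : Fin k → ℝ := fun i => |γ₁ i| with hv
    have hvnorm : ∑ i, v i ^ 2 = 1 := by
      simp only [hv, sq_abs]; exact hγnorm
    have hform : ∀ w : Fin k → ℝ, w ⬝ᵥ C.mulVec w = ∑ a, ∑ b, w a * (C a b * w b) := by
      intro w
      simp [dotProduct, Matrix.mulVec, Finset.mul_sum]
    have hlt : γ₁ ⬝ᵥ C.mulVec γ₁ < v ⬝ᵥ C.mulVec v := by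
      rw [hform, hform]
      have hii' : i ≠ i' := by
        intro h; rw [h] at hneg; nlinarith [sq_nonneg (γ₁ i')]
      have hterm : ∀ a b : Fin k, γ₁ a * (C a b * γ₁ b) ≤ v a * (C a b * v b) := by
        intro a b
        calc γ₁ a * (C a b * γ₁ b) ≤ |γ₁ a * (C a b * γ₁ b)| := le_abs_self _
          _ = v a * (C a b * v b) := by
              simp only [hv, abs_mul, abs_of_pos (hCpos a b)]
      apply Finset.sum_lt_sum (fun a _ => Finset.sum_le_sum (fun b _ => hterm a b))
      refine ⟨i, Finset.mem_univ i, ?_⟩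
      apply Finset.sum_lt_sum (fun b _ => hterm i b)
      refine ⟨i', Finset.mem_univ i', ?_⟩
      have h1 : γ₁ i * (C i i' * γ₁ i') = C i i' * (γ₁ i * γ₁ i') := by ring
      have h2 : v i * (C i i' * v i') = C i i' * |γ₁ i * γ₁ i'| := by
        simp only [hv, abs_mul]; ring
      rw [h1, h2]
      have habs : γ₁ i * γ₁ i' < |γ₁ i * γ₁ i'| := by
        rw [abs_of_neg hneg]; linarith
      exact mul_lt_mul_of_pos_left habs (hCpos i i')
    exact absurd (hγmax v hvnorm) (not_le.mpr hlt)
  intro i i' hne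
  -- row norms and cross terms
  have hrow : ∀ a : Fin k, ∑ j, Rk a j * Rk a j = 1 - γ₁ a * γ₁ a := by
    intro a
    have := hRorth a a
    simp only [if_true, eq_self_iff_true] at this
    linarith
  have hcross : ∑ j, Rk i j * Rk i' j = - (γ₁ i * γ₁ i') := by
    have := hRorth i i'
    simp only [if_neg hne] at this
    linarith
  have hsum : ∑ j, (Rk i j - Rk i' j) ^ 2
      = 2 - γ₁ i * γ₁ i - γ₁ i' * γ₁ i' + 2 * (γ₁ i * γ₁ i') := by
    have expand : ∀ j, (Rk i j - Rk i' j) ^ 2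
        = Rk i j * Rk i j + Rk i' j * Rk i' j - 2 * (Rk i j * Rk i' j) := by
      intro j; ring
    rw [Finset.sum_congr rfl (fun j _ => expand j), Finset.sum_sub_distrib,
      Finset.sum_add_distrib, ← Finset.mul_sum, hrow i, hrow i', hcross]
    ring
  -- γ₁ i ^2 + γ₁ i'^2 ≤ 1
  have hsq : γ₁ i ^ 2 + γ₁ i' ^ 2 ≤ 1 := by
    have : ∑ a ∈ ({i, i'} : Finset (Fin k)), γ₁ a ^ 2 ≤ ∑ a, γ₁ a ^ 2 :=
      Finset.sum_le_sum_of_subset_of_nonneg (Finset.subset_univ _)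
        (fun a _ _ => sq_nonneg _)
    rwa [Finset.sum_pair hne, hγnorm] at this
  have h1 : (1 : ℝ) ≤ ∑ j, (Rk i j - Rk i' j) ^ 2 := by
    rw [hsum]
    have := hsign i i'
    nlinarith [sq_nonneg (γ₁ i), sq_nonneg (γ₁ i')]
  calc (1 : ℝ) = Real.sqrt 1 := by simp
    _ ≤ Real.sqrt (∑ j, (Rk i j - Rk i' j) ^ 2) := Real.sqrt_le_sqrt h1
end

section
/- Restriction lemma for regularized Signed Laplacians: Let B_γ be a symmetric n×n matrix with positive regularized degrees (D̄_γ)_{jj} = Σ_{j'} |(B_γ)_{jj'}| > 0, let L̄_γ = D̄_γ^{-1/2} B_γ D̄_γ^{-1/2}, and let 𝒞 ⊆ [n]×[n]. Suppose 0 < ε < 1 is such that for every row j, Σ_{j': (j,j')∈𝒞} |(B_γ)_{jj'}| ≤ ε · (D̄_γ)_{jj}. Then ‖(L̄_γ)_𝒞‖ ≤ √ε, where (L̄_γ)_𝒞 is obtained from L̄_γ by zeroing out all entries outside 𝒞. -/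
open Matrix

/-- Restriction lemma for regularized Signed Laplacians: if `B` is symmetric with
positive absolute degrees `d j = ∑ j', |B j j'|`, `L̄ = D^{-1/2} B D^{-1/2}` and
`𝒞 ⊆ [n]×[n]` is such that each row's absolute degree within `𝒞` is at most
`ε` times its total degree (`0 < ε < 1`), then `‖L̄_𝒞‖ ≤ √ε`, where `L̄_𝒞`
zeroes all entries of `L̄` outside `𝒞`. -/
theorem restriction_of_signed_laplacian {n : ℕ}
    (B : Matrix (Fin n) (Fin n) ℝ) (hB : B.IsSymm)
    (d : Fin n → ℝ) (hd : ∀ j, d j = ∑ j', |B j j'|) (hdpos : ∀ j, 0 < d j)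
    (C : Finset (Fin n × Fin n)) (ε : ℝ) (hε0 : 0 < ε) (hε1 : ε < 1)
    (hrow : ∀ j, (∑ j' ∈ Finset.univ.filter (fun j' => (j, j') ∈ C), |B j j'|)
        ≤ ε * d j)
    (L : Matrix (Fin n) (Fin n) ℝ)
    (hL : L = Matrix.diagonal (fun j => (Real.sqrt (d j))⁻¹) * B *
        Matrix.diagonal (fun j => (Real.sqrt (d j))⁻¹)) :
    specNorm (Matrix.of fun j j' => if (j, j') ∈ C then L j j' else 0)
      ≤ Real.sqrt ε := by
  set s : Fin n → ℝ := fun j => Real.sqrt (d j) with hs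
  have hspos : ∀ j, 0 < s j := fun j => Real.sqrt_pos.2 (hdpos j)
  have hssq : ∀ j, s j * s j = d j := fun j => Real.mul_self_sqrt (hdpos j).le
  set m : Matrix (Fin n) (Fin n) ℝ :=
    Matrix.of fun j j' => if (j, j') ∈ C then L j j' else 0 with hm
  have hLe : ∀ j j', L j j' = (s j)⁻¹ * B j j' * (s j')⁻¹ := by
    intro j j'
    simp [hL, Matrix.mul_apply, Matrix.diagonal_apply, Finset.sum_ite_eq,
      Finset.sum_ite_eq', mul_comm]
    rfl
  set a : Fin n → Fin n → ℝ := fun j j' => |m j j'| with ha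
  have ha0 : ∀ j j', 0 ≤ a j j' := fun j j' => abs_nonneg _
  have haval : ∀ j j', a j j' =
      if (j, j') ∈ C then (s j)⁻¹ * |B j j'| * (s j')⁻¹ else 0 := by
    intro j j'
    by_cases h : (j, j') ∈ C <;>
      simp [ha, hm, h, hLe, abs_mul, abs_of_pos (inv_pos.2 (hspos j)),
        abs_of_pos (inv_pos.2 (hspos j'))]
  -- row bound: ∑_{j'} a j j' * s j' ≤ ε * s j
  have hrowS : ∀ j, ∑ j', a j j' * s j' ≤ ε * s j := by
    intro j
    have h1 : ∀ j', a j j' * s j' = if (j, j') ∈ C then (s j)⁻¹ * |B j j'| else 0 := by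
      intro j'
      rw [haval]
      by_cases h : (j, j') ∈ C
      · simp only [h, if_true]
        rw [show (s j)⁻¹ * |B j j'| * (s j')⁻¹ * s j' =
            (s j)⁻¹ * |B j j'| * ((s j')⁻¹ * s j') by ring,
          inv_mul_cancel₀ (hspos j').ne', mul_one]
      · simp [h]
    calc ∑ j', a j j' * s j'
        = ∑ j' ∈ Finset.univ.filter (fun j' => (j, j') ∈ C), (s j)⁻¹ * |B j j'| := by
          rw [Finset.sum_filter]; exact Finset.sum_congr rfl fun j' _ => h1 j'
      _ = (s j)⁻¹ * ∑ j' ∈ Finset.univ.filter (fun j' => (j, j') ∈ C), |B j j'| := by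
          rw [Finset.mul_sum]
      _ ≤ (s j)⁻¹ * (ε * d j) := by
          exact mul_le_mul_of_nonneg_left (hrow j) (inv_pos.2 (hspos j)).le
      _ = ε * s j := by
          rw [← hssq j, show (s j)⁻¹ * (ε * (s j * s j)) = ε * s j * ((s j)⁻¹ * s j) by ring,
            inv_mul_cancel₀ (hspos j).ne', mul_one]
  -- column bound: ∑_{j} a j j' * s j ≤ s j'
  have hcolS : ∀ j', ∑ j, a j j' * s j ≤ s j' := by
    intro j'
    have h1 : ∀ j, a j j' * s j ≤ (s j')⁻¹ * |B j j'| := by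
      intro j
      rw [haval]
      by_cases h : (j, j') ∈ C
      · simp only [h, if_true]
        rw [show (s j)⁻¹ * |B j j'| * (s j')⁻¹ * s j = (s j')⁻¹ * |B j j'| * ((s j)⁻¹ * s j)
            by ring, inv_mul_cancel₀ (hspos j).ne', mul_one]
      · simp only [h, if_false, zero_mul]
        positivity
    calc ∑ j, a j j' * s j ≤ ∑ j, (s j')⁻¹ * |B j j'| := Finset.sum_le_sum fun j _ => h1 j
      _ = (s j')⁻¹ * ∑ j, |B j' j| := by
          rw [Finset.mul_sum]
          exact Finset.sum_congr rfl fun j _ => by rw [← hB.apply j j']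
      _ = (s j')⁻¹ * d j' := by rw [← hd]
      _ = s j' := by
          rw [← hssq j', show (s j')⁻¹ * (s j' * s j') = s j' * ((s j')⁻¹ * s j') by ring,
            inv_mul_cancel₀ (hspos j').ne', mul_one]
  -- key quadratic bound
  have key : ∀ x : Fin n → ℝ,
      ∑ j, (m.mulVec x j) ^ 2 ≤ ε * ∑ j, (x j) ^ 2 := by
    intro x
    have hperrow : ∀ j, (m.mulVec x j) ^ 2 ≤
        ε * s j * ∑ j', a j j' / s j' * (x j') ^ 2 := by
      intro j
      have habs : |m.mulVec x j| ≤ ∑ j', a j j' * |x j'| := by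
        rw [Matrix.mulVec, dotProduct]
        refine (Finset.abs_sum_le_sum_abs _ _).trans ?_
        exact Finset.sum_le_sum fun j' _ => by rw [abs_mul]
      have hcs : (∑ j', a j j' * |x j'|) ^ 2 ≤
          (∑ j', a j j' * s j') * ∑ j', a j j' / s j' * (x j') ^ 2 := by
        have := Finset.sum_mul_sq_le_sq_mul_sq Finset.univ
          (fun j' => Real.sqrt (a j j' * s j'))
          (fun j' => Real.sqrt (a j j' / s j') * |x j'|)
        have e1 : ∀ j', Real.sqrt (a j j' * s j') * (Real.sqrt (a j j' / s j') * |x j'|)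
            = a j j' * |x j'| := by
          intro j'
          rw [← mul_assoc, ← Real.sqrt_mul (by positivity)]
          rw [show a j j' * s j' * (a j j' / s j') = a j j' ^ 2 * (s j' / s j') by ring,
            div_self (hspos j').ne', mul_one]
          rw [Real.sqrt_sq (ha0 j j')]
        have e2 : ∀ j', Real.sqrt (a j j' * s j') ^ 2 = a j j' * s j' := by
          intro j'; exact Real.sq_sqrt (by positivity)
        have e3 : ∀ j', (Real.sqrt (a j j' / s j') * |x j'|) ^ 2
            = a j j' / s j' * (x j') ^ 2 := by
          intro j'
          rw [mul_pow, Real.sq_sqrt (by positivity), sq_abs]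
        simp_rw [e1, e2, e3] at this
        exact this
      have hnn : 0 ≤ ∑ j', a j j' / s j' * (x j') ^ 2 := by positivity
      calc (m.mulVec x j) ^ 2 = |m.mulVec x j| ^ 2 := (sq_abs _).symm
        _ ≤ (∑ j', a j j' * |x j'|) ^ 2 := by
            exact pow_le_pow_left₀ (abs_nonneg _) habs 2
        _ ≤ (∑ j', a j j' * s j') * ∑ j', a j j' / s j' * (x j') ^ 2 := hcs
        _ ≤ ε * s j * ∑ j', a j j' / s j' * (x j') ^ 2 :=
            mul_le_mul_of_nonneg_right (hrowS j) hnn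
    calc ∑ j, (m.mulVec x j) ^ 2
        ≤ ∑ j, ε * s j * ∑ j', a j j' / s j' * (x j') ^ 2 :=
          Finset.sum_le_sum fun j _ => hperrow j
      _ = ε * ∑ j', (x j') ^ 2 / s j' * ∑ j, a j j' * s j := by
          simp only [Finset.mul_sum]
          rw [Finset.sum_comm]
          exact Finset.sum_congr rfl fun j' _ => Finset.sum_congr rfl fun j _ => by ring
      _ ≤ ε * ∑ j', (x j') ^ 2 / s j' * s j' := by
          refine mul_le_mul_of_nonneg_left (Finset.sum_le_sum fun j' _ => ?_) hε0.le
          exact mul_le_mul_of_nonneg_left (hcolS j') (by positivity)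
      _ = ε * ∑ j', (x j') ^ 2 := by
          refine congrArg _ (Finset.sum_congr rfl fun j' _ => ?_)
          rw [div_mul_cancel₀ _ (hspos j').ne']
  -- conclude via the operator norm bound
  rw [specNorm]
  refine ContinuousLinearMap.opNorm_le_bound _ (Real.sqrt_nonneg ε) fun x => ?_
  have happ : Matrix.toEuclideanCLM (𝕜 := ℝ) m x =
      (WithLp.equiv 2 (Fin n → ℝ)).symm
        (Matrix.toLin' m (WithLp.equiv 2 (Fin n → ℝ) x)) := rfl
  rw [happ, Matrix.toLin'_apply, EuclideanSpace.norm_eq, EuclideanSpace.norm_eq]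
  have hy : ∀ i, (WithLp.equiv 2 (Fin n → ℝ)).symm
      (m.mulVec (WithLp.equiv 2 (Fin n → ℝ) x)) i
      = m.mulVec (WithLp.equiv 2 (Fin n → ℝ) x) i := fun i => rfl
  simp_rw [hy, Real.norm_eq_abs, sq_abs]
  rw [← Real.sqrt_mul hε0.le]
  refine Real.sqrt_le_sqrt ?_
  exact key (WithLp.equiv 2 (Fin n → ℝ) x)
end

section
/- Let D̄ and D̄_γ = D̄ + γI be diagonal matrices with D̄_{jj} ≥ d_min > 0 and γ > 0, let A be a symmetric matrix and A_γ = A + (γ/n)J with J all-ones. If L_sym,γ := I − D̄_γ^{-1/2} A_γ D̄_γ^{-1/2} and L̄_sym := I − D̄^{-1/2} A D̄^{-1/2} denote the regularized and unregularized normalized Laplacians of a graph with nonnegative adjacency A (so that ‖I − L̄_sym‖ ≤ 1), then ‖D̄^{-1/2}AD̄^{-1/2} − D̄_γ^{-1/2}AD̄_γ^{-1/2}‖ ≤ 2√(γ/(d_min+γ)) and ‖D̄_γ^{-1/2}(A_γ−A)D̄_γ^{-1/2}‖ ≤ γ/(d_min+γ), hence ‖L_sym,γ − L̄_sym‖ ≤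 3√(γ/(d_min+γ)). -/
open Matrix
open scoped RealInnerProductSpace

section Aux

lemma toECLM_apply {n : ℕ} (A : Matrix (Fin n) (Fin n) ℝ) (x : EuclideanSpace ℝ (Fin n))
    (i : Fin n) : toEuclideanCLM (𝕜 := ℝ) A x i = ∑ j, A i j * x j := by
  have := congrFun (Matrix.ofLp_toEuclideanCLM (𝕜 := ℝ) A x) i
  simpa [Matrix.mulVec, dotProduct] using this

lemma real_inner_pilp {n : ℕ} (x y : EuclideanSpace ℝ (Fin n)) :
    ⟪x, y⟫ = ∑ i, x i * y i := by
  rw [PiLp.inner_apply]; simp [RCLike.inner_apply]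
  exact Finset.sum_congr rfl fun _ _ => mul_comm _ _

lemma inner_toECLM {n : ℕ} (A : Matrix (Fin n) (Fin n) ℝ) (x y : EuclideanSpace ℝ (Fin n)) :
    ⟪toEuclideanCLM (𝕜 := ℝ) A x, y⟫ = ∑ i, ∑ j, A i j * x j * y i := by
  rw [real_inner_pilp]
  exact Finset.sum_congr rfl fun i _ => by rw [toECLM_apply, Finset.sum_mul]

lemma norm_sq_eq {n : ℕ} (x : EuclideanSpace ℝ (Fin n)) : ‖x‖ ^ 2 = ∑ i, x i ^ 2 := by
  rw [← real_inner_self_eq_norm_sq, real_inner_pilp]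
  exact Finset.sum_congr rfl fun i _ => (sq _).symm

lemma specNorm_nonneg {n : ℕ} (A : Matrix (Fin n) (Fin n) ℝ) : 0 ≤ specNorm A := norm_nonneg _

lemma specNorm_add_le {n : ℕ} (A B : Matrix (Fin n) (Fin n) ℝ) :
    specNorm (A + B) ≤ specNorm A + specNorm B := by
  unfold specNorm; rw [map_add]; exact norm_add_le _ _

lemma specNorm_neg {n : ℕ} (A : Matrix (Fin n) (Fin n) ℝ) : specNorm (-A) = specNorm A := by
  unfold specNorm; rw [map_neg, norm_neg]

lemma specNorm_sub_le {n : ℕ} (A B : Matrix (Fin n) (Fin n) ℝ) :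
    specNorm (A - B) ≤ specNorm A + specNorm B := by
  rw [sub_eq_add_neg]
  exact (specNorm_add_le _ _).trans (by rw [specNorm_neg])

lemma specNorm_mul_le {n : ℕ} (A B : Matrix (Fin n) (Fin n) ℝ) :
    specNorm (A * B) ≤ specNorm A * specNorm B := by
  unfold specNorm; rw [_root_.map_mul]; exact norm_mul_le _ _

lemma specNorm_le_of_sq {n : ℕ} (A : Matrix (Fin n) (Fin n) ℝ) (c : ℝ) (hc : 0 ≤ c)
    (h : ∀ x : EuclideanSpace ℝ (Fin n),
      ‖toEuclideanCLM (𝕜 := ℝ) A x‖ ^ 2 ≤ c ^ 2 * ‖x‖ ^ 2) : specNorm A ≤ c := by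
  refine ContinuousLinearMap.opNorm_le_bound _ hc fun x => ?_
  have h1 := h x
  nlinarith [norm_nonneg (toEuclideanCLM (𝕜 := ℝ) A x), norm_nonneg x,
    mul_nonneg hc (norm_nonneg x)]

lemma specNorm_diagonal_le {n : ℕ} (f : Fin n → ℝ) (c : ℝ) (hc : 0 ≤ c)
    (h : ∀ i, |f i| ≤ c) : specNorm (Matrix.diagonal f) ≤ c := by
  refine specNorm_le_of_sq _ c hc fun x => ?_
  rw [norm_sq_eq, norm_sq_eq, Finset.mul_sum]
  refine Finset.sum_le_sum fun i _ => ?_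
  rw [toECLM_apply]
  have : ∑ j, Matrix.diagonal f i j * x j = f i * x i := by
    rw [Finset.sum_eq_single i] <;> simp +contextual [Matrix.diagonal_apply_ne']
  rw [this, mul_pow]
  have h2 : f i ^ 2 ≤ c ^ 2 := by
    have := h i; nlinarith [abs_nonneg (f i), sq_abs (f i)]
  nlinarith [sq_nonneg (x i)]

lemma opNorm_le_of_symm_quad {n : ℕ}
    (T : EuclideanSpace ℝ (Fin n) →L[ℝ] EuclideanSpace ℝ (Fin n))
    (hs : ∀ x y, ⟪T x, y⟫ = ⟪x, T y⟫) (c : ℝ) (hc : 0 ≤ c)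
    (hq : ∀ x, |⟪T x, x⟫| ≤ c * ‖x‖ ^ 2) : ‖T‖ ≤ c := by
  have key : ∀ x y : EuclideanSpace ℝ (Fin n),
      |⟪T x, y⟫| ≤ c / 2 * (‖x‖ ^ 2 + ‖y‖ ^ 2) := by
    intro x y
    have e : ⟪T (x + y), x + y⟫ - ⟪T (x - y), x - y⟫ = 4 * ⟪T x, y⟫ := by
      have h1 : ⟪T y, x⟫ = ⟪T x, y⟫ := by rw [hs y x, real_inner_comm]
      simp only [map_add, map_sub, inner_add_left, inner_add_right, inner_sub_left,
        inner_sub_right]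
      rw [h1]; ring
    have h2 := hq (x + y)
    have h3 := hq (x - y)
    have h4 : |4 * ⟪T x, y⟫| ≤ c * ‖x + y‖ ^ 2 + c * ‖x - y‖ ^ 2 := by
      rw [← e]
      calc |⟪T (x + y), x + y⟫ - ⟪T (x - y), x - y⟫|
          ≤ |⟪T (x + y), x + y⟫| + |⟪T (x - y), x - y⟫| := abs_sub _ _
        _ ≤ _ := add_le_add h2 h3
    have hpar : ‖x + y‖ ^ 2 + ‖x - y‖ ^ 2 = 2 * (‖x‖ ^ 2 + ‖y‖ ^ 2) := by
      have := parallelogram_law_with_norm ℝ x y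
      nlinarith [this]
    rw [abs_mul] at h4
    have : (4 : ℝ) * |⟪T x, y⟫| ≤ c * (2 * (‖x‖ ^ 2 + ‖y‖ ^ 2)) := by
      rw [← mul_add, hpar] at h4; simpa using h4
    linarith
  refine ContinuousLinearMap.opNorm_le_bound _ hc fun x => ?_
  rcases eq_or_ne (T x) 0 with h0 | h0
  · simp [h0, mul_nonneg hc (norm_nonneg x)]
  have hTx : (0 : ℝ) < ‖T x‖ := norm_pos_iff.mpr h0
  have hx : x ≠ 0 := by rintro rfl; simp at h0
  have hxn : (0 : ℝ) < ‖x‖ := norm_pos_iff.mpr hx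
  set y : EuclideanSpace ℝ (Fin n) := (‖x‖ / ‖T x‖) • T x with hy
  have hyn : ‖y‖ = ‖x‖ := by
    rw [hy, norm_smul]
    rw [Real.norm_eq_abs, abs_div, abs_of_nonneg (norm_nonneg x), abs_of_nonneg (norm_nonneg (T x))]
    field_simp
  have hinner : ⟪T x, y⟫ = ‖x‖ * ‖T x‖ := by
    rw [hy, real_inner_smul_right, real_inner_self_eq_norm_sq]
    field_simp
  have := key x y
  rw [hinner, hyn] at this
  have habs : ‖x‖ * ‖T x‖ ≤ c / 2 * (‖x‖ ^ 2 + ‖x‖ ^ 2) := by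
    calc ‖x‖ * ‖T x‖ ≤ |‖x‖ * ‖T x‖| := le_abs_self _
      _ ≤ _ := this
  nlinarith [habs, hxn, hTx]

lemma sandwich_entry {n : ℕ} (f g : Fin n → ℝ) (A : Matrix (Fin n) (Fin n) ℝ) (i j : Fin n) :
    (Matrix.diagonal f * A * Matrix.diagonal g) i j = f i * A i j * g j := by
  simp [Matrix.mul_diagonal, Matrix.diagonal_mul]

lemma specNorm_normalized_le_one {n : ℕ} (A : Matrix (Fin n) (Fin n) ℝ) (hA : A.IsSymm)
    (hApos : ∀ j j', 0 ≤ A j j') (d : Fin n → ℝ) (hd : ∀ j, d j = ∑ j', A j j')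
    (hdpos : ∀ j, 0 < d j) :
    specNorm (Matrix.diagonal (fun j => (Real.sqrt (d j))⁻¹) * A *
      Matrix.diagonal (fun j => (Real.sqrt (d j))⁻¹)) ≤ 1 := by
  set f : Fin n → ℝ := fun j => (Real.sqrt (d j))⁻¹ with hf
  set M : Matrix (Fin n) (Fin n) ℝ := Matrix.diagonal f * A * Matrix.diagonal f with hMdef
  have hsymA : ∀ i j, A i j = A j i := fun i j => by
    conv_rhs => rw [← hA]
    rfl
  have hMsym : ∀ i j, M i j = M j i := fun i j => by
    rw [hMdef, sandwich_entry, sandwich_entry, hsymA i j]; ring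
  refine opNorm_le_of_symm_quad _ ?_ 1 zero_le_one ?_
  · intro x y
    rw [real_inner_comm (toEuclideanCLM (𝕜 := ℝ) M y) x, inner_toECLM, inner_toECLM,
      Finset.sum_comm]
    exact Finset.sum_congr rfl fun a _ => Finset.sum_congr rfl fun b _ => by
      rw [hMsym b a]; ring
  · intro x
    set y : Fin n → ℝ := fun i => f i * x i with hy
    have hterm : ∀ i j, M i j * x j * x i = A i j * y i * y j := fun i j => by
      rw [hMdef, sandwich_entry, hy]; ring
    rw [inner_toECLM]
    have hrw : ∑ i, ∑ j, M i j * x j * x i = ∑ i, ∑ j, A i j * y i * y j :=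
      Finset.sum_congr rfl fun i _ => Finset.sum_congr rfl fun j _ => hterm i j
    rw [hrw, one_mul, norm_sq_eq]
    have habs : |∑ i, ∑ j, A i j * y i * y j| ≤
        ∑ i, ∑ j, A i j * ((y i ^ 2 + y j ^ 2) / 2) := by
      refine (Finset.abs_sum_le_sum_abs _ _).trans (Finset.sum_le_sum fun i _ => ?_)
      refine (Finset.abs_sum_le_sum_abs _ _).trans (Finset.sum_le_sum fun j _ => ?_)
      rw [abs_mul, abs_mul, abs_of_nonneg (hApos i j), mul_assoc]
      refine mul_le_mul_of_nonneg_left ?_ (hApos i j)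
      nlinarith [sq_nonneg (|y i| - |y j|), sq_abs (y i), sq_abs (y j)]
    refine habs.trans (le_of_eq ?_)
    have hcol : ∀ j, ∑ i, A i j = d j := fun j => by
      rw [hd]; exact Finset.sum_congr rfl fun i _ => hsymA i j
    have step1 : ∑ i, ∑ j, A i j * ((y i ^ 2 + y j ^ 2) / 2)
        = ∑ i, ∑ j, (A i j * (y i ^ 2 / 2) + A i j * (y j ^ 2 / 2)) :=
      Finset.sum_congr rfl fun i _ => Finset.sum_congr rfl fun j _ => by ring
    rw [step1]
    have step2 : ∀ i, ∑ j, (A i j * (y i ^ 2 / 2) + A i j * (y j ^ 2 / 2))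
        = d i * (y i ^ 2 / 2) + ∑ j, A i j * (y j ^ 2 / 2) := fun i => by
      rw [Finset.sum_add_distrib, ← Finset.sum_mul, ← hd]
    simp only [step2]
    rw [Finset.sum_add_distrib, Finset.sum_comm (f := fun i j => A i j * (y j ^ 2 / 2))]
    have step3 : ∀ j, ∑ i, A i j * (y j ^ 2 / 2) = d j * (y j ^ 2 / 2) := fun j => by
      rw [← Finset.sum_mul, hcol]
    simp only [step3]
    rw [← Finset.sum_add_distrib]
    refine Finset.sum_congr rfl fun i _ => ?_
    have hdi := hdpos i
    have hsq : f i ^ 2 = (d i)⁻¹ := by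
      rw [hf]
      rw [inv_pow, Real.sq_sqrt hdi.le]
    have : y i ^ 2 = x i ^ 2 / d i := by
      rw [hy, mul_pow, hsq]; field_simp
    rw [this]; field_simp; ring

lemma specNorm_rankone_le {n : ℕ} (c : ℝ) (hc : 0 ≤ c) (u : Fin n → ℝ) :
    specNorm (Matrix.of fun i j => c * (u i * u j)) ≤ c * ∑ i, u i ^ 2 := by
  have hU : (0 : ℝ) ≤ ∑ i, u i ^ 2 := Finset.sum_nonneg fun i _ => sq_nonneg _
  refine specNorm_le_of_sq _ _ (mul_nonneg hc hU) fun x => ?_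
  rw [norm_sq_eq, norm_sq_eq]
  have happ : ∀ i, toEuclideanCLM (𝕜 := ℝ) (Matrix.of fun i j => c * (u i * u j)) x i
      = c * u i * (∑ j, u j * x j) := fun i => by
    rw [toECLM_apply]
    rw [Finset.mul_sum]
    exact Finset.sum_congr rfl fun j _ => by simp [Matrix.of_apply]; ring
  simp only [happ]
  have hcs : (∑ j, u j * x j) ^ 2 ≤ (∑ j, u j ^ 2) * ∑ j, x j ^ 2 :=
    Finset.sum_mul_sq_le_sq_mul_sq _ _ _
  have hexp : ∀ i, (c * u i * (∑ j, u j * x j)) ^ 2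
      = (c ^ 2 * (∑ j, u j * x j) ^ 2) * u i ^ 2 := fun i => by ring
  simp only [hexp]
  rw [← Finset.mul_sum]
  have h1 : c ^ 2 * (∑ j, u j * x j) ^ 2 * (∑ i, u i ^ 2)
      ≤ c ^ 2 * ((∑ j, u j ^ 2) * ∑ j, x j ^ 2) * (∑ i, u i ^ 2) := by
    have := mul_le_mul_of_nonneg_left hcs (sq_nonneg c)
    exact mul_le_mul_of_nonneg_right this hU
  refine h1.trans (le_of_eq ?_)
  ring

lemma scalar_bounds {dmin γ : ℝ} (hdmin : 0 < dmin) (hγ : 0 < γ) {x : ℝ} (hx : dmin ≤ x) :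
    |Real.sqrt x * (Real.sqrt (x + γ))⁻¹| ≤ 1 ∧
    |1 - Real.sqrt x * (Real.sqrt (x + γ))⁻¹| ≤ Real.sqrt (γ / (dmin + γ)) := by
  have hx0 : 0 < x := hdmin.trans_le hx
  have hxγ : 0 < x + γ := by linarith
  set a : ℝ := Real.sqrt x * (Real.sqrt (x + γ))⁻¹ with ha
  have ha0 : 0 ≤ a := mul_nonneg (Real.sqrt_nonneg _) (inv_nonneg.2 (Real.sqrt_nonneg _))
  have hxγs : (0 : ℝ) < Real.sqrt (x + γ) := Real.sqrt_pos.2 hxγ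
  have ha2 : a ^ 2 = x / (x + γ) := by
    rw [ha, mul_pow, inv_pow, Real.sq_sqrt hx0.le, Real.sq_sqrt hxγ.le, div_eq_mul_inv]
  have ha1 : a ≤ 1 := by nlinarith [ha2, div_le_one_of_le₀ (by linarith : x ≤ x + γ) hxγ.le]
  set b : ℝ := Real.sqrt (γ / (x + γ)) with hb
  have hb0 : 0 ≤ b := Real.sqrt_nonneg _
  have hb2 : b ^ 2 = γ / (x + γ) := Real.sq_sqrt (by positivity)
  have hb1 : b ≤ 1 := by nlinarith [div_le_one_of_le₀ (by linarith : γ ≤ x + γ) hxγ.le]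
  have hab : a ^ 2 + b ^ 2 = 1 := by rw [ha2, hb2]; field_simp
  have hkey : 1 - a ≤ b := by
    nlinarith [mul_nonneg ha0 (sub_nonneg.2 ha1), mul_nonneg hb0 (sub_nonneg.2 hb1)]
  have hble : b ≤ Real.sqrt (γ / (dmin + γ)) := by
    apply Real.sqrt_le_sqrt
    apply div_le_div_of_nonneg_left hγ.le (by linarith) (by linarith)
  constructor
  · rw [abs_of_nonneg ha0]; exact ha1
  · rw [abs_of_nonneg (by linarith : (0:ℝ) ≤ 1 - a)]
    exact hkey.trans hble

end Aux

/-- Comparison of regularized and unregularized normalized Laplacians of a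
nonnegative adjacency matrix `A` with degrees `d j ≥ d_min > 0`:
with `A_γ = A + (γ/n) J` and `D̄_γ = D̄ + γ I`,
`‖D̄^{-1/2}AD̄^{-1/2} - D̄_γ^{-1/2}AD̄_γ^{-1/2}‖ ≤ 2√(γ/(d_min+γ))`,
`‖D̄_γ^{-1/2}(A_γ-A)D̄_γ^{-1/2}‖ ≤ γ/(d_min+γ)`, and hence
`‖L_{sym,γ} - L̄_sym‖ ≤ 3√(γ/(d_min+γ))`. -/
theorem regularized_laplacian_comparison {n : ℕ}
    (A : Matrix (Fin n) (Fin n) ℝ) (hA : A.IsSymm)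
    (hApos : ∀ j j', 0 ≤ A j j')
    (dmin γ : ℝ) (hdmin : 0 < dmin) (hγ : 0 < γ)
    (d : Fin n → ℝ) (hd : ∀ j, d j = ∑ j', A j j') (hdge : ∀ j, dmin ≤ d j) :
    let Dh : Matrix (Fin n) (Fin n) ℝ :=
      Matrix.diagonal fun j => (Real.sqrt (d j))⁻¹
    let Dγh : Matrix (Fin n) (Fin n) ℝ :=
      Matrix.diagonal fun j => (Real.sqrt (d j + γ))⁻¹
    let Aγ : Matrix (Fin n) (Fin n) ℝ :=
      A + (γ / n) • (Matrix.of fun _ _ => (1 : ℝ))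
    let Lsym : Matrix (Fin n) (Fin n) ℝ := 1 - Dh * A * Dh
    let Lsymγ : Matrix (Fin n) (Fin n) ℝ := 1 - Dγh * Aγ * Dγh
    specNorm (Dh * A * Dh - Dγh * A * Dγh) ≤ 2 * Real.sqrt (γ / (dmin + γ)) ∧
    specNorm (Dγh * (Aγ - A) * Dγh) ≤ γ / (dmin + γ) ∧
    specNorm (Lsymγ - Lsym) ≤ 3 * Real.sqrt (γ / (dmin + γ)) := by
  intro Dh Dγh Aγ Lsym Lsymγ
  have hdpos : ∀ j, 0 < d j := fun j => hdmin.trans_le (hdge j)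
  have hsd : ∀ j, (0:ℝ) < Real.sqrt (d j) := fun j => Real.sqrt_pos.2 (hdpos j)
  have hsdγ : ∀ j, (0:ℝ) < Real.sqrt (d j + γ) := fun j =>
    Real.sqrt_pos.2 (by have := hdpos j; linarith)
  set s : ℝ := Real.sqrt (γ / (dmin + γ)) with hsdef
  have hs0 : 0 ≤ s := Real.sqrt_nonneg _
  set e : Fin n → ℝ := fun j => Real.sqrt (d j) * (Real.sqrt (d j + γ))⁻¹ with he
  set E : Matrix (Fin n) (Fin n) ℝ := Matrix.diagonal e with hE
  set M : Matrix (Fin n) (Fin n) ℝ := Dh * A * Dh with hM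
  have hM1 : specNorm M ≤ 1 := specNorm_normalized_le_one A hA hApos d hd hdpos
  have hE1 : specNorm E ≤ 1 :=
    specNorm_diagonal_le _ 1 zero_le_one fun i => (scalar_bounds hdmin hγ (hdge i)).1
  have hIE : specNorm (1 - E) ≤ s := by
    have h1 : (1 : Matrix (Fin n) (Fin n) ℝ) - E = Matrix.diagonal (fun j => 1 - e j) := by
      rw [hE, ← Matrix.diagonal_one, Matrix.diagonal_sub]
    rw [h1]
    exact specNorm_diagonal_le _ s hs0 fun i => (scalar_bounds hdmin hγ (hdge i)).2
  -- key algebraic identity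
  have hEME : E * M * E = Dγh * A * Dγh := by
    ext i j
    simp only [hM, hE, he, Dh, Dγh, sandwich_entry]
    have h1 := (hsd i).ne'
    have h2 := (hsd j).ne'
    calc Real.sqrt (d i) * (Real.sqrt (d i + γ))⁻¹ *
          ((Real.sqrt (d i))⁻¹ * A i j * (Real.sqrt (d j))⁻¹) *
          (Real.sqrt (d j) * (Real.sqrt (d j + γ))⁻¹)
        = (Real.sqrt (d i) * (Real.sqrt (d i))⁻¹) * (Real.sqrt (d j) * (Real.sqrt (d j))⁻¹) *
          ((Real.sqrt (d i + γ))⁻¹ * A i j * (Real.sqrt (d j + γ))⁻¹) := by ring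
      _ = (Real.sqrt (d i + γ))⁻¹ * A i j * (Real.sqrt (d j + γ))⁻¹ := by
          rw [mul_inv_cancel₀ h1, mul_inv_cancel₀ h2]; ring
  have key1 : Dh * A * Dh - Dγh * A * Dγh = (1 - E) * M + E * M * (1 - E) := by
    rw [← hEME, hM]
    noncomm_ring
  have bound1 : specNorm (Dh * A * Dh - Dγh * A * Dγh) ≤ 2 * s := by
    rw [key1]
    have t1 : specNorm ((1 - E) * M) ≤ s :=
      (specNorm_mul_le _ _).trans (by
        calc specNorm (1 - E) * specNorm M ≤ s * 1 :=
          mul_le_mul hIE hM1 (specNorm_nonneg _) hs0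
        _ = s := mul_one s)
    have t2 : specNorm (E * M * (1 - E)) ≤ s := by
      refine (specNorm_mul_le _ _).trans ?_
      have hEM : specNorm (E * M) ≤ 1 :=
        (specNorm_mul_le _ _).trans (by
          calc specNorm E * specNorm M ≤ 1 * 1 :=
            mul_le_mul hE1 hM1 (specNorm_nonneg _) zero_le_one
          _ = 1 := one_mul 1)
      calc specNorm (E * M) * specNorm (1 - E) ≤ 1 * s :=
        mul_le_mul hEM hIE (specNorm_nonneg _) zero_le_one
      _ = s := one_mul s
    calc specNorm ((1 - E) * M + E * M * (1 - E))
        ≤ specNorm ((1 - E) * M) + specNorm (E * M * (1 - E)) := specNorm_add_le _ _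
      _ ≤ s + s := add_le_add t1 t2
      _ = 2 * s := by ring
  -- second bound
  set u : Fin n → ℝ := fun j => (Real.sqrt (d j + γ))⁻¹ with hu
  have hBeq : Dγh * (Aγ - A) * Dγh
      = Matrix.of fun i j => (γ / n) * (u i * u j) := by
    ext i j
    have hAγ : Aγ - A = (γ / n) • (Matrix.of fun _ _ => (1 : ℝ)) := by
      simp [Aγ]
    rw [hAγ]
    simp only [Dγh, ← hu, sandwich_entry, Matrix.smul_apply, Matrix.of_apply, smul_eq_mul,
      mul_one]
    ring
  have bound2 : specNorm (Dγh * (Aγ - A) * Dγh) ≤ γ / (dmin + γ) := by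
    rw [hBeq]
    have hγn : (0 : ℝ) ≤ γ / n := by positivity
    refine (specNorm_rankone_le _ hγn u).trans ?_
    have husum : ∑ i, u i ^ 2 ≤ (n : ℝ) * (dmin + γ)⁻¹ := by
      have : ∀ i ∈ Finset.univ, u i ^ 2 ≤ (dmin + γ)⁻¹ := by
        intro i _
        rw [hu, inv_pow, Real.sq_sqrt (by have := hdpos i; linarith : (0:ℝ) ≤ d i + γ)]
        exact inv_anti₀ (by linarith) (by have := hdge i; linarith)
      calc ∑ i, u i ^ 2 ≤ ∑ _i : Fin n, (dmin + γ)⁻¹ := Finset.sum_le_sum this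
        _ = (n : ℝ) * (dmin + γ)⁻¹ := by simp [Finset.sum_const, nsmul_eq_mul]
    rcases Nat.eq_zero_or_pos n with hn | hn
    · subst hn
      simp
      positivity
    · have hnpos : (0 : ℝ) < n := by exact_mod_cast hn
      calc (γ / n) * ∑ i, u i ^ 2 ≤ (γ / n) * ((n : ℝ) * (dmin + γ)⁻¹) :=
        mul_le_mul_of_nonneg_left husum hγn
      _ = γ / (dmin + γ) := by field_simp
  refine ⟨bound1, bound2, ?_⟩
  -- third bound
  have key3 : Lsymγ - Lsym = (Dh * A * Dh - Dγh * A * Dγh) - Dγh * (Aγ - A) * Dγh := by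
    show (1 - Dγh * Aγ * Dγh) - (1 - Dh * A * Dh)
      = (Dh * A * Dh - Dγh * A * Dγh) - Dγh * (Aγ - A) * Dγh
    noncomm_ring
  have hts : γ / (dmin + γ) ≤ s := by
    have ht0 : (0:ℝ) ≤ γ / (dmin + γ) := by positivity
    have ht1 : γ / (dmin + γ) ≤ 1 := by
      rw [div_le_one (by linarith)]; linarith
    calc γ / (dmin + γ) = Real.sqrt ((γ / (dmin + γ)) ^ 2) := (Real.sqrt_sq ht0).symm
      _ ≤ s := Real.sqrt_le_sqrt (by nlinarith)
  calc specNorm (Lsymγ - Lsym)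
      ≤ specNorm (Dh * A * Dh - Dγh * A * Dγh) + specNorm (Dγh * (Aγ - A) * Dγh) := by
        rw [key3]; exact specNorm_sub_le _ _
    _ ≤ 2 * s + γ / (dmin + γ) := add_le_add bound1 bound2
    _ ≤ 2 * s + s := by linarith
    _ = 3 * s := by ring
end

section
/- Let D and D̂ be positive diagonal n×n matrices and A a symmetric matrix with ‖D^{-1}‖·‖A‖ ≤ 1 (equivalently ‖D^{-1}A‖ ≤ 1). If ‖A − Â‖ ≤ Δ_A, ‖D − D̂‖ ≤ Δ_D, and every diagonal entry of D̂ equals d̄ > 0 with |D_{jj} − d̄| ≤ Δ_D < d̄ for all j, then ‖D^{-1/2}AD^{-1/2} − D̂^{-1/2}ÂD̂^{-1/2}‖ ≤ Δ_A/d̄ + 2Δ_D/d̄ + Δ_D²/d̄². -/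
open Matrix

open scoped Matrix.Norms.L2Operator

lemma specNorm_eq_norm {n : ℕ} (A : Matrix (Fin n) (Fin n) ℝ) : specNorm A = ‖A‖ := rfl

lemma specNorm_diag_le {n : ℕ} (d : Fin n → ℝ) {C : ℝ} (hC : 0 ≤ C)
    (h : ∀ j, |d j| ≤ C) : ‖(Matrix.diagonal d : Matrix (Fin n) (Fin n) ℝ)‖ ≤ C := by
  rw [Matrix.cstar_norm_def]
  refine ContinuousLinearMap.opNorm_le_bound _ hC fun x => ?_
  have hx : (Matrix.toEuclideanCLM (𝕜 := ℝ) (Matrix.diagonal d)) x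
      = (WithLp.equiv _ _).symm ((Matrix.diagonal d) *ᵥ (WithLp.equiv _ _ x)) := rfl
  rw [hx, EuclideanSpace.norm_eq, EuclideanSpace.norm_eq]
  have step : ∀ i : Fin n, ‖((WithLp.equiv 2 _).symm ((Matrix.diagonal d) *ᵥ (WithLp.equiv 2 _ x)) : EuclideanSpace ℝ (Fin n)) i‖ ^ 2 ≤ C ^ 2 * ‖x i‖ ^ 2 := by
    intro i
    have : ((WithLp.equiv 2 _).symm ((Matrix.diagonal d) *ᵥ (WithLp.equiv 2 _ x)) : EuclideanSpace ℝ (Fin n)) i = d i * x i := by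
      simp [Matrix.mulVec_diagonal]
    rw [this, Real.norm_eq_abs, Real.norm_eq_abs, abs_mul, mul_pow]
    have := h i
    nlinarith [mul_le_mul this this (abs_nonneg (d i)) hC, sq_nonneg (|x i|), sq_nonneg (x i)]
  calc √(∑ i, ‖((WithLp.equiv 2 _).symm ((Matrix.diagonal d) *ᵥ (WithLp.equiv 2 _ x)) : EuclideanSpace ℝ (Fin n)) i‖ ^ 2)
      ≤ √(∑ i, C ^ 2 * ‖x i‖ ^ 2) := Real.sqrt_le_sqrt (Finset.sum_le_sum fun i _ => step i)
    _ = C * √(∑ i, ‖x i‖ ^ 2) := by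
        rw [← Finset.mul_sum, Real.sqrt_mul (sq_nonneg C), Real.sqrt_sq hC]

lemma entry_le_specNorm_diag {n : ℕ} (d : Fin n → ℝ) (j : Fin n) :
    |d j| ≤ ‖(Matrix.diagonal d : Matrix (Fin n) (Fin n) ℝ)‖ := by
  have h := (Matrix.toEuclideanCLM (𝕜 := ℝ) (Matrix.diagonal d)).le_opNorm
    (EuclideanSpace.single j (1:ℝ))
  have hx : (Matrix.toEuclideanCLM (𝕜 := ℝ) (Matrix.diagonal d)) (EuclideanSpace.single j 1)
      = EuclideanSpace.single j (d j) := by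
    have h1 : (Matrix.diagonal d) *ᵥ (Pi.single j (1:ℝ)) = Pi.single j (d j) := by
      rw [Matrix.diagonal_mulVec_single, mul_one]
    unfold EuclideanSpace.single
    rw [← PiLp.toLp_single, Matrix.toEuclideanCLM_toLp, h1, PiLp.toLp_single]
  rw [hx, EuclideanSpace.norm_single, EuclideanSpace.norm_single, Real.norm_eq_abs,
    norm_one, mul_one] at h
  rw [Matrix.cstar_norm_def]
  exact h

/-- Key scalar estimates on the difference of inverse square roots. -/
lemma sqrt_inv_diff_bounds {x b a Δ : ℝ} (hx : 0 < x) (hb : 0 < b) (ha : 0 < a)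
    (hax : a ≤ x) (hΔ0 : 0 ≤ Δ) (hd : |x - b| ≤ Δ) :
    |(Real.sqrt x)⁻¹ - (Real.sqrt b)⁻¹| ≤ Δ / (b * Real.sqrt a) ∧
      |(Real.sqrt x)⁻¹ - (Real.sqrt b)⁻¹| ≤ Δ / (Real.sqrt b * a) := by
  have hsj : 0 < Real.sqrt x := Real.sqrt_pos.2 hx
  have hsb : 0 < Real.sqrt b := Real.sqrt_pos.2 hb
  have hsa : 0 < Real.sqrt a := Real.sqrt_pos.2 ha
  set sj := Real.sqrt x
  set sb := Real.sqrt b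
  set sa := Real.sqrt a
  have hsax : sa ≤ sj := Real.sqrt_le_sqrt hax
  have hj2 : sj * sj = x := Real.mul_self_sqrt hx.le
  have hb2 : sb * sb = b := Real.mul_self_sqrt hb.le
  have ha2 : sa * sa = a := Real.mul_self_sqrt ha.le
  have habs : |sj - sb| * (sj + sb) ≤ Δ := by
    have h1 : (sj - sb) * (sj + sb) = x - b := by nlinarith
    calc |sj - sb| * (sj + sb) = |(sj - sb) * (sj + sb)| := by
          rw [abs_mul, abs_of_pos (by linarith : 0 < sj + sb)]
      _ = |x - b| := by rw [h1]
      _ ≤ Δ := hd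
  have ht0 : 0 ≤ |sj - sb| := abs_nonneg _
  have hdiff : |sj⁻¹ - sb⁻¹| = |sj - sb| / (sj * sb) := by
    have h2 : sj⁻¹ - sb⁻¹ = (sb - sj) / (sj * sb) := by
      field_simp
    rw [h2, abs_div, abs_of_pos (mul_pos hsj hsb), abs_sub_comm]
  constructor
  · rw [hdiff, ← hb2, div_le_div_iff₀ (mul_pos hsj hsb) (by positivity)]
    nlinarith [mul_le_mul habs hsax hsa.le hΔ0, mul_nonneg ht0 hsb.le,
      mul_nonneg (mul_nonneg ht0 hsb.le) hsa.le]
  · rw [hdiff, ← ha2, div_le_div_iff₀ (mul_pos hsj hsb) (by positivity)]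
    have hA1 : |sj - sb| * sj ≤ Δ := by nlinarith [mul_nonneg ht0 hsb.le]
    have e1 : |sj - sb| * (sa * sa) ≤ |sj - sb| * (sj * sj) := by
      nlinarith [mul_le_mul hsax hsax hsa.le hsj.le]
    have e2 : |sj - sb| * (sj * sj) ≤ Δ * sj :=
      by nlinarith [mul_le_mul_of_nonneg_right hA1 hsj.le]
    nlinarith [mul_le_mul_of_nonneg_right (e1.trans e2) hsb.le]

/-- Deterministic normalized-Laplacian perturbation bound: if `D = diag(d_j)` is
positive diagonal, `D̂ = d̄ I` with `d̄ > 0`, `A, Â` are symmetric with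
`‖D⁻¹‖·‖A‖ ≤ 1`, `‖A - Â‖ ≤ Δ_A`, `‖D - D̂‖ ≤ Δ_D`, `|d_j - d̄| ≤ Δ_D < d̄`
for all `j`, then
`‖D^{-1/2} A D^{-1/2} - D̂^{-1/2} Â D̂^{-1/2}‖ ≤ Δ_A/d̄ + 2Δ_D/d̄ + Δ_D²/d̄²`. -/
theorem normalized_laplacian_perturbation {n : ℕ}
    (dD : Fin n → ℝ) (dbar ΔA ΔD : ℝ)
    (hdD : ∀ j, 0 < dD j) (hdbar : 0 < dbar)
    (A Ahat : Matrix (Fin n) (Fin n) ℝ) (hA : A.IsSymm) (hAhat : Ahat.IsSymm)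
    (hDA : specNorm (Matrix.diagonal dD)⁻¹ * specNorm A ≤ 1)
    (hΔA : specNorm (A - Ahat) ≤ ΔA)
    (hΔD : specNorm (Matrix.diagonal dD - Matrix.diagonal fun _ => dbar) ≤ ΔD)
    (hentry : ∀ j, |dD j - dbar| ≤ ΔD) (hΔDlt : ΔD < dbar) :
    specNorm
        (Matrix.diagonal (fun j => (Real.sqrt (dD j))⁻¹) * A *
            Matrix.diagonal (fun j => (Real.sqrt (dD j))⁻¹)
          - Matrix.diagonal (fun _ => (Real.sqrt dbar)⁻¹) * Ahat *
              Matrix.diagonal (fun _ => (Real.sqrt dbar)⁻¹))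
      ≤ ΔA / dbar + 2 * ΔD / dbar + ΔD ^ 2 / dbar ^ 2 := by
  classical
  simp only [specNorm_eq_norm] at hDA hΔA hΔD ⊢
  have hΔD0 : 0 ≤ ΔD := le_trans (norm_nonneg _) hΔD
  have hΔA0 : 0 ≤ ΔA := le_trans (norm_nonneg _) hΔA
  have hsb : 0 < Real.sqrt dbar := Real.sqrt_pos.2 hdbar
  set c : ℝ := (Real.sqrt dbar)⁻¹ with hc_def
  have hc : 0 < c := inv_pos.2 hsb
  have hsbsb : Real.sqrt dbar * Real.sqrt dbar = dbar := Real.mul_self_sqrt hdbar.le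
  have hcc : c * c = dbar⁻¹ := by rw [hc_def, ← mul_inv, hsbsb]
  set S : Matrix (Fin n) (Fin n) ℝ := Matrix.diagonal fun j => (Real.sqrt (dD j))⁻¹ with hS
  have hconst : (Matrix.diagonal fun _ : Fin n => c) = c • (1 : Matrix (Fin n) (Fin n) ℝ) :=
    (Matrix.smul_one_eq_diagonal c).symm
  set E : Matrix (Fin n) (Fin n) ℝ := S - c • 1 with hE
  have hEdiag : E = Matrix.diagonal fun j => (Real.sqrt (dD j))⁻¹ - c := by
    rw [hE, hS, Matrix.smul_one_eq_diagonal, Matrix.diagonal_sub]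
  -- key algebraic identity
  have key : S * A * S - (Matrix.diagonal fun _ : Fin n => c) * Ahat *
        (Matrix.diagonal fun _ : Fin n => c)
      = E * A * E + c • (E * A) + c • (A * E) + (c * c) • (A - Ahat) := by
    rw [hconst, hE]
    simp only [sub_mul, mul_sub, smul_mul_assoc, mul_smul_comm, one_mul, mul_one,
      smul_sub, smul_smul]
    abel
  -- ‖A‖ ≤ dD j for every j
  have hinv : (Matrix.diagonal dD)⁻¹ = Matrix.diagonal fun j => (dD j)⁻¹ := by
    apply Matrix.inv_eq_right_inv
    rw [Matrix.diagonal_mul_diagonal]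
    rw [show (fun j => dD j * (dD j)⁻¹) = fun _ => (1:ℝ) from funext fun j =>
      mul_inv_cancel₀ (hdD j).ne', Matrix.diagonal_one]
  have ha_le : ∀ j, ‖A‖ ≤ dD j := by
    intro j
    have h1 : (dD j)⁻¹ ≤ ‖(Matrix.diagonal dD)⁻¹‖ := by
      rw [hinv]
      have := entry_le_specNorm_diag (fun j => (dD j)⁻¹) j
      rwa [abs_of_pos (inv_pos.2 (hdD j))] at this
    have h2 : (dD j)⁻¹ * ‖A‖ ≤ 1 :=
      le_trans (mul_le_mul_of_nonneg_right h1 (norm_nonneg A)) hDA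
    have h3 := mul_le_mul_of_nonneg_left h2 (hdD j).le
    rwa [← mul_assoc, mul_inv_cancel₀ (hdD j).ne', one_mul, mul_one] at h3
  rw [key]
  set a : ℝ := ‖A‖ with ha_def
  have ha0 : 0 ≤ a := norm_nonneg _
  -- triangle + submultiplicativity
  have tri : ‖E * A * E + c • (E * A) + c • (A * E) + (c * c) • (A - Ahat)‖
      ≤ ‖E‖ * a * ‖E‖ + c * (‖E‖ * a) + c * (a * ‖E‖) + (c * c) * ‖A - Ahat‖ := by
    have t1 : ‖E * A * E‖ ≤ ‖E‖ * a * ‖E‖ := by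
      calc ‖E * A * E‖ ≤ ‖E * A‖ * ‖E‖ := Matrix.l2_opNorm_mul _ _
        _ ≤ ‖E‖ * a * ‖E‖ :=
          mul_le_mul_of_nonneg_right (Matrix.l2_opNorm_mul _ _) (norm_nonneg _)
    have t2 : ‖c • (E * A)‖ ≤ c * (‖E‖ * a) := by
      rw [norm_smul, Real.norm_eq_abs, abs_of_pos hc]
      exact mul_le_mul_of_nonneg_left (Matrix.l2_opNorm_mul _ _) hc.le
    have t3 : ‖c • (A * E)‖ ≤ c * (a * ‖E‖) := by
      rw [norm_smul, Real.norm_eq_abs, abs_of_pos hc]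
      exact mul_le_mul_of_nonneg_left (Matrix.l2_opNorm_mul _ _) hc.le
    have t4 : ‖(c * c) • (A - Ahat)‖ = (c * c) * ‖A - Ahat‖ := by
      rw [norm_smul, Real.norm_eq_abs, abs_of_pos (mul_pos hc hc)]
    calc ‖E * A * E + c • (E * A) + c • (A * E) + (c * c) • (A - Ahat)‖
        ≤ ‖E * A * E + c • (E * A) + c • (A * E)‖ + ‖(c * c) • (A - Ahat)‖ :=
          norm_add_le _ _
      _ ≤ ‖E * A * E + c • (E * A)‖ + ‖c • (A * E)‖ + ‖(c * c) • (A - Ahat)‖ := by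
          gcongr; exact norm_add_le _ _
      _ ≤ ‖E * A * E‖ + ‖c • (E * A)‖ + ‖c • (A * E)‖ + ‖(c * c) • (A - Ahat)‖ := by
          gcongr ?_ + _ + _; exact norm_add_le _ _
      _ ≤ ‖E‖ * a * ‖E‖ + c * (‖E‖ * a) + c * (a * ‖E‖) + (c * c) * ‖A - Ahat‖ := by
          rw [t4]; exact add_le_add (add_le_add (add_le_add t1 t2) t3) le_rfl
  refine le_trans tri ?_
  have t4' : (c * c) * ‖A - Ahat‖ ≤ ΔA / dbar := by
    rw [hcc, div_eq_inv_mul]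
    exact mul_le_mul_of_nonneg_left hΔA (inv_pos.2 hdbar).le
  by_cases haz : a = 0
  · -- A = 0
    have hA0 : A = (0 : Matrix (Fin n) (Fin n) ℝ) := norm_eq_zero.mp haz
    have hEnorm : (0:ℝ) ≤ ‖E‖ := norm_nonneg _
    have : ‖E‖ * a * ‖E‖ + c * (‖E‖ * a) + c * (a * ‖E‖) + (c * c) * ‖A - Ahat‖
        = (c * c) * ‖A - Ahat‖ := by rw [haz]; ring
    rw [this]
    have h5 : 0 ≤ 2 * ΔD / dbar := by positivity
    have h6 : 0 ≤ ΔD ^ 2 / dbar ^ 2 := by positivity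
    linarith [t4']
  · have ha : 0 < a := lt_of_le_of_ne ha0 (Ne.symm haz)
    have hsa : 0 < Real.sqrt a := Real.sqrt_pos.2 ha
    have hsasa : Real.sqrt a * Real.sqrt a = a := Real.mul_self_sqrt ha.le
    have hE1 : ‖E‖ ≤ ΔD / (dbar * Real.sqrt a) := by
      rw [hEdiag]
      refine specNorm_diag_le _ (by positivity) fun j => ?_
      exact (sqrt_inv_diff_bounds (hdD j) hdbar ha (ha_le j) hΔD0 (hentry j)).1
    have hE2 : ‖E‖ ≤ ΔD / (Real.sqrt dbar * a) := by
      rw [hEdiag]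
      refine specNorm_diag_le _ (by positivity) fun j => ?_
      exact (sqrt_inv_diff_bounds (hdD j) hdbar ha (ha_le j) hΔD0 (hentry j)).2
    have ht0 : 0 ≤ ‖E‖ := norm_nonneg _
    have T1 : ‖E‖ * a * ‖E‖ ≤ ΔD ^ 2 / dbar ^ 2 := by
      have step : ‖E‖ * a * ‖E‖ ≤ (ΔD / (dbar * Real.sqrt a)) * a * (ΔD / (dbar * Real.sqrt a)) := by
        have h1 : ‖E‖ * a ≤ (ΔD / (dbar * Real.sqrt a)) * a :=
          mul_le_mul_of_nonneg_right hE1 ha0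
        exact mul_le_mul h1 hE1 ht0 (by positivity)
      refine le_trans step (le_of_eq ?_)
      field_simp
      linear_combination (-(ΔD ^ 2)) * hsasa
    have T2 : c * (‖E‖ * a) ≤ ΔD / dbar := by
      have h1 : ‖E‖ * a ≤ ΔD / Real.sqrt dbar := by
        calc ‖E‖ * a ≤ (ΔD / (Real.sqrt dbar * a)) * a :=
              mul_le_mul_of_nonneg_right hE2 ha0
          _ = ΔD / Real.sqrt dbar := by field_simp; try ring
      calc c * (‖E‖ * a) ≤ c * (ΔD / Real.sqrt dbar) :=
            mul_le_mul_of_nonneg_left h1 hc.le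
        _ = ΔD / dbar := by rw [hc_def, ← hsbsb]; field_simp; rw [Real.sqrt_sq hsb.le]
    have T3 : c * (a * ‖E‖) ≤ ΔD / dbar := by
      rw [show a * ‖E‖ = ‖E‖ * a from mul_comm _ _]
      exact T2
    have goal2 : ‖E‖ * a * ‖E‖ + c * (‖E‖ * a) + c * (a * ‖E‖) + c * c * ‖A - Ahat‖
        ≤ ΔD ^ 2 / dbar ^ 2 + ΔD / dbar + ΔD / dbar + ΔA / dbar := by
      exact add_le_add (add_le_add (add_le_add T1 T2) T3) t4'
    refine le_trans goal2 (le_of_eq ?_)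
    ring
end
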